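/- arXiv:2007.11062 — 7 statements merged into one kernel-verified Lean document; each statement's English description precedes it below -/
import Mathlib

section
/- A positive integer n is practical if and only if n = 1, or n ≥ 2 with prime factorization n = p₁^{α₁} p₂^{α₂} ⋯ p_k^{α_k} (p₁ < p₂ < ⋯ < p_k, all αᵢ > 0) satisfying p_j ≤ σ(p₁^{α₁} ⋯ p_{j-1}^{α_{j-1}}) + 1 for all 1 ≤ j ≤ k. -/
open Finset

/-- `n` is practical: every `m` with `1 ≤ m ≤ n` is a sum of distinct divisors of `n`. -/
def Practical (n : ℕ) : Prop :=
  0 < n ∧ ∀ m : ℕ, 1 ≤ m → m ≤ n → ∃ s ⊆ n.divisors, ∑ d ∈ s, d = m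

/-- Sum-of-divisors function. -/
def sigma (n : ℕ) : ℕ := ∑ d ∈ n.divisors, d

/-- auxiliary: every `N ≤ σ(n)` is a sum of distinct divisors of `n`. -/
def Srac (n : ℕ) : Prop := ∀ N : ℕ, N ≤ sigma n → ∃ s ⊆ n.divisors, ∑ d ∈ s, d = N

lemma sigma_pp {p : ℕ} (hp : p.Prime) (a : ℕ) :
    sigma (p ^ a) = ∑ k ∈ Finset.range (a + 1), p ^ k := by
  rw [sigma, ← ArithmeticFunction.sigma_one_apply, ArithmeticFunction.sigma_one_apply_prime_pow hp]

lemma sigma_mul_pp {m p : ℕ} (hp : p.Prime) (hpm : ¬ p ∣ m) (a : ℕ) :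
    sigma (m * p ^ a) = sigma m * ∑ k ∈ Finset.range (a + 1), p ^ k := by
  rw [sigma, Nat.Coprime.sum_divisors_mul
    (Nat.Coprime.pow_right a ((hp.coprime_iff_not_dvd.mpr hpm).symm)), ← sigma_pp hp]
  rfl

lemma geom_succ (p : ℕ) (hp : 1 ≤ p) (a : ℕ) :
    (p - 1) * ∑ k ∈ Finset.range a, p ^ k + 1 = p ^ a := by
  induction a with
  | zero => simp
  | succ a ih =>
    have h1 : 1 + (p - 1) = p := by omega
    calc (p - 1) * ∑ k ∈ Finset.range (a + 1), p ^ k + 1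
        = ((p - 1) * ∑ k ∈ Finset.range a, p ^ k + 1) + (p - 1) * p ^ a := by
          rw [Finset.sum_range_succ, Nat.mul_add]; ring
      _ = p ^ a + (p - 1) * p ^ a := by rw [ih]
      _ = (1 + (p - 1)) * p ^ a := by ring
      _ = p ^ (a + 1) := by rw [h1, pow_succ, mul_comm]

lemma srac_mul_pp {m p : ℕ} (hm : 0 < m) (hp : p.Prime) (hpm : ¬ p ∣ m)
    (hple : p ≤ sigma m + 1) (hsr : Srac m) : ∀ a, Srac (m * p ^ a) := by
  intro a
  induction a with
  | zero => simpa using hsr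
  | succ a ih =>
    intro N hN
    rw [sigma_mul_pp hp hpm, Finset.sum_range_succ, Nat.mul_add] at hN
    set q := p ^ (a + 1) with hq
    set c := min (N / q) (sigma m) with hc
    have hq0 : 0 < q := pow_pos hp.pos _
    have hcq : c * q ≤ N :=
      le_trans (Nat.mul_le_mul_right q (min_le_left _ _)) (Nat.div_mul_le_self N q)
    have hr : N - c * q ≤ sigma (m * p ^ a) := by
      rw [sigma_mul_pp hp hpm]
      rcases le_total (N / q) (sigma m) with h | h
      · have hcN : c * q = N / q * q := by rw [hc, min_eq_left h]
        have hmod : N / q * q + N % q = N := Nat.div_add_mod' N q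
        have hmlt : N % q < q := Nat.mod_lt _ hq0
        -- q ≤ sigma m * ∑ + 1
        have hqle : q ≤ sigma m * ∑ k ∈ Finset.range (a + 1), p ^ k + 1 := by
          rw [hq, ← geom_succ p hp.one_le (a + 1)]
          have : (p - 1) * ∑ k ∈ Finset.range (a + 1), p ^ k
              ≤ sigma m * ∑ k ∈ Finset.range (a + 1), p ^ k :=
            Nat.mul_le_mul_right _ (by omega)
          omega
        set A := sigma m * ∑ k ∈ Finset.range (a + 1), p ^ k with hA
        set B := N / q * q with hB
        omega
      · have hcN : c * q = sigma m * q := by rw [hc, min_eq_right h]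
        rw [hcN]
        set A := sigma m * ∑ k ∈ Finset.range (a + 1), p ^ k with hA
        set B := sigma m * q with hB
        omega
    obtain ⟨s, hs, hssum⟩ := ih (N - c * q) hr
    obtain ⟨t, ht, htsum⟩ := hsr c (min_le_right _ _)
    have hn0 : m * p ^ (a + 1) ≠ 0 := by positivity
    have hdisj : Disjoint s (t.image (· * q)) := by
      rw [Finset.disjoint_left]
      intro x hxs hxt
      obtain ⟨d, hd, rfl⟩ := Finset.mem_image.mp hxt
      have hx : d * q ∣ m * p ^ a := (Nat.mem_divisors.mp (hs hxs)).1
      have hqdvd : q ∣ m * p ^ a := (dvd_mul_left q d).trans hx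
      have hcop : (Nat.Coprime q m) := Nat.Coprime.pow_left _ (hp.coprime_iff_not_dvd.mpr hpm)
      have : q ∣ p ^ a := hcop.dvd_of_dvd_mul_left hqdvd
      have := (Nat.pow_dvd_pow_iff_le_right hp.one_lt).mp this
      omega
    refine ⟨s ∪ t.image (· * q), ?_, ?_⟩
    · intro x hx
      rcases Finset.mem_union.mp hx with hx | hx
      · exact Nat.divisors_subset_of_dvd hn0
          (mul_dvd_mul_left m (pow_dvd_pow p (Nat.le_succ a))) (hs hx)
      · obtain ⟨d, hd, rfl⟩ := Finset.mem_image.mp hx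
        have hdm : d ∣ m := (Nat.mem_divisors.mp (ht hd)).1
        exact Nat.mem_divisors.mpr ⟨mul_dvd_mul hdm dvd_rfl, hn0⟩
    · rw [Finset.sum_union hdisj,
        Finset.sum_image (fun x _ y _ h => Nat.eq_of_mul_eq_mul_right hq0 h), hssum,
        ← Finset.sum_mul, htsum]
      exact Nat.sub_add_cancel hcq

lemma srac_one : Srac 1 := by
  intro N hN
  have h1 : sigma 1 = 1 := by simp [sigma]
  rw [h1] at hN
  rcases Nat.le_one_iff_eq_zero_or_eq_one.mp hN with rfl | rfl
  · exact ⟨∅, by simp, by simp⟩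
  · exact ⟨{1}, by simp, by simp⟩

lemma factM_apply {n p : ℕ} (hn : n ≠ 0) (r : ℕ) :
    (∏ q ∈ n.primeFactors.filter (fun q => q < p), q ^ n.factorization q).factorization r
      = if r < p then n.factorization r else 0 := by
  rw [Nat.factorization_prod (fun q hq =>
    pow_ne_zero _ (Nat.pos_of_mem_primeFactors (Finset.mem_filter.mp hq).1).ne')]
  rw [Finsupp.finset_sum_apply]
  have hterm : ∀ q ∈ n.primeFactors.filter (fun q => q < p),
      ((q ^ n.factorization q).factorization) r = if q = r then n.factorization q else 0 := by
    intro q hq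
    rw [(Nat.prime_of_mem_primeFactors (Finset.mem_filter.mp hq).1).factorization_pow,
      Finsupp.single_apply]
  rw [Finset.sum_congr rfl hterm, Finset.sum_ite_eq']
  by_cases hr : r ∈ n.primeFactors
  · simp [Finset.mem_filter, hr]
  · have h0 : n.factorization r = 0 := by
      rw [← Finsupp.notMem_support_iff, Nat.support_factorization]; exact hr
    simp [Finset.mem_filter, hr, h0]

lemma M_pos {n p : ℕ} :
    0 < ∏ q ∈ n.primeFactors.filter (fun q => q < p), q ^ n.factorization q :=
  Finset.prod_pos fun q hq =>
    pow_pos (Nat.pos_of_mem_primeFactors (Finset.mem_filter.mp hq).1) _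

lemma cond_srac : ∀ n : ℕ, 0 < n →
    (∀ p : ℕ, p.Prime → p ∣ n →
      p ≤ sigma (∏ q ∈ n.primeFactors.filter (fun q => q < p), q ^ n.factorization q) + 1) →
    Srac n := by
  intro n
  induction n using Nat.strong_induction_on with
  | _ n ih =>
    intro hn hcond
    by_cases hn1 : n = 1
    · subst hn1; exact srac_one
    · have h2 : 2 ≤ n := by omega
      have hne : n.primeFactors.Nonempty := Nat.nonempty_primeFactors.mpr h2
      set p := n.primeFactors.max' hne with hpdef
      have hpmem : p ∈ n.primeFactors := Finset.max'_mem _ _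
      have hp : p.Prime := Nat.prime_of_mem_primeFactors hpmem
      set a := n.factorization p with ha
      set m := ∏ q ∈ n.primeFactors.filter (fun q => q < p), q ^ n.factorization q with hm
      have hm0 : 0 < m := M_pos
      have hfe : n.primeFactors.filter (fun q => q < p) = n.primeFactors.erase p := by
        ext q
        simp only [Finset.mem_filter, Finset.mem_erase]
        constructor
        · rintro ⟨hq, hlt⟩; exact ⟨by omega, hq⟩
        · rintro ⟨hne', hq⟩
          exact ⟨hq, lt_of_le_of_ne (Finset.le_max' _ _ hq) hne'⟩
      have hprodall : ∏ q ∈ n.primeFactors, q ^ n.factorization q = n := by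
        conv_rhs => rw [← Nat.factorization_prod_pow_eq_self hn.ne']
        rw [Finsupp.prod]
        rfl
      have hmp : m * p ^ a = n := by
        rw [hm, hfe, ha, Finset.prod_erase_mul n.primeFactors _ hpmem, hprodall]
      have hpm : ¬ p ∣ m := by
        intro hdvd
        have h0 : m.factorization p = 0 := by rw [hm, factM_apply hn.ne']; simp
        have h1 : 0 < m.factorization p := hp.factorization_pos_of_dvd hm0.ne' hdvd
        omega
      have ha1 : 1 ≤ a := hp.factorization_pos_of_dvd hn.ne' (Nat.dvd_of_mem_primeFactors hpmem)
      have hmn : m < n := by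
        have hpa : 2 ≤ p ^ a :=
          le_trans hp.two_le (le_trans (le_of_eq (pow_one p).symm) (Nat.pow_le_pow_right hp.pos ha1))
        calc m = m * 1 := (mul_one m).symm
          _ < m * p ^ a := Nat.mul_lt_mul_of_le_of_lt (le_refl m) (by omega) hm0
          _ = n := hmp
      have hmf : ∀ r, m.factorization r = if r < p then n.factorization r else 0 := fun r => by
        rw [hm]; exact factM_apply hn.ne' r
      have hmpf : m.primeFactors = n.primeFactors.filter (fun q => q < p) := by
        ext r
        rw [← Nat.support_factorization, Finsupp.mem_support_iff, hmf r, Finset.mem_filter,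
          ← Nat.support_factorization, Finsupp.mem_support_iff]
        split_ifs with h <;> simp [h]
      have hcondm : ∀ q : ℕ, q.Prime → q ∣ m →
          q ≤ sigma (∏ r ∈ m.primeFactors.filter (fun r => r < q), r ^ m.factorization r) + 1 := by
        intro q hq hqm
        have hqn : q ∣ n := hqm.trans ⟨p ^ a, hmp.symm⟩
        have hqmem : q ∈ n.primeFactors := Nat.mem_primeFactors.mpr ⟨hq, hqn, hn.ne'⟩
        have hqp : q < p :=
          lt_of_le_of_ne (Finset.le_max' _ _ hqmem) (fun h => hpm (h ▸ hqm))
        have heq : ∏ r ∈ m.primeFactors.filter (fun r => r < q), r ^ m.factorization r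
            = ∏ r ∈ n.primeFactors.filter (fun r => r < q), r ^ n.factorization r := by
          rw [hmpf, Finset.filter_filter]
          have hset : n.primeFactors.filter (fun r => r < p ∧ r < q)
              = n.primeFactors.filter (fun r => r < q) :=
            Finset.filter_congr (fun r _ => by constructor <;> (intro h; first | exact h.2 | exact ⟨lt_trans h hqp, h⟩))
          rw [hset]
          refine Finset.prod_congr rfl fun r hr => ?_
          have hrq : r < q := (Finset.mem_filter.mp hr).2
          rw [hmf r, if_pos (lt_trans hrq hqp)]
        rw [heq]
        exact hcond q hq hqn
      have hsm : Srac m := ih m hmn hm0 hcondm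
      have hple : p ≤ sigma m + 1 := hcond p hp (Nat.dvd_of_mem_primeFactors hpmem)
      have := srac_mul_pp hm0 hp hpm hple hsm a
      rwa [hmp] at this

/-- Stewart–Sierpinski -/
theorem practical_iff (n : ℕ) (hn : 0 < n) :
    Practical n ↔
      (n = 1 ∨ (2 ≤ n ∧ ∀ p : ℕ, p.Prime → p ∣ n →
        p ≤ sigma (∏ q ∈ n.primeFactors.filter (fun q => q < p), q ^ n.factorization q) + 1)) := by
  constructor
  · intro hpr
    by_cases hn1 : n = 1
    · exact Or.inl hn1
    · refine Or.inr ⟨by omega, ?_⟩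
      intro p hp hpn
      by_contra hcon
      push_neg at hcon
      set M := ∏ q ∈ n.primeFactors.filter (fun q => q < p), q ^ n.factorization q with hM
      have hM0 : 0 < M := M_pos
      have hpn' : p ≤ n := Nat.le_of_dvd hn hpn
      obtain ⟨t, ht, htsum⟩ := hpr.2 (sigma M + 1) (Nat.succ_le_succ (Nat.zero_le _)) (by omega)
      have hdM : t ⊆ M.divisors := by
        intro d hd
        have hdn : d ∣ n := (Nat.mem_divisors.mp (ht hd)).1
        have hd0 : d ≠ 0 := (Nat.pos_of_mem_divisors (ht hd)).ne'
        have hdle : d ≤ sigma M + 1 := by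
          rw [← htsum]
          exact Finset.single_le_sum (f := fun x => x) (fun _ _ => Nat.zero_le _) hd
        refine Nat.mem_divisors.mpr ⟨?_, hM0.ne'⟩
        rw [← Nat.factorization_le_iff_dvd hd0 hM0.ne']
        intro q
        rw [hM, factM_apply hn.ne' q]
        by_cases hq : d.factorization q = 0
        · simp [hq]
        · have hqmem : q ∈ d.primeFactors := by
            rw [← Nat.support_factorization, Finsupp.mem_support_iff]; exact hq
          have hq1 : q.Prime := Nat.prime_of_mem_primeFactors hqmem
          have hq2 : q ∣ d := Nat.dvd_of_mem_primeFactors hqmem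
          have hqp : q < p := by
            by_contra hge
            push_neg at hge
            have hqd : q ≤ d := Nat.le_of_dvd (by omega) hq2
            omega
          rw [if_pos hqp]
          exact (Nat.factorization_le_iff_dvd hd0 hn.ne').mpr hdn q
      have : ∑ d ∈ t, d ≤ sigma M := Finset.sum_le_sum_of_subset hdM
      omega
  · rintro (rfl | ⟨h2, hcond⟩)
    · refine ⟨one_pos, fun m h1 hm1 => ?_⟩
      have : m = 1 := le_antisymm hm1 h1
      subst this
      exact ⟨{1}, by simp, by simp⟩
    · have hs := cond_srac n hn hcond
      refine ⟨hn, fun m _ hmn => hs m (le_trans hmn ?_)⟩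
      exact Finset.single_le_sum (f := fun x => x) (fun _ _ => Nat.zero_le _)
        (Nat.mem_divisors_self n hn.ne')
end

section
/- If n is a practical number and m is a positive integer with m ≤ σ(n) + 1, then mn is practical. In particular, if n is practical and p is a prime with p ≤ σ(n) + 1, then np is practical. -/
lemma subsetSum_complete (s : Finset ℕ)
    (hs : ∀ d ∈ s, d ≤ 1 + ∑ e ∈ s.filter (· < d), e) :
    ∀ k ≤ ∑ e ∈ s, e, ∃ t ⊆ s, ∑ e ∈ t, e = k := by
  induction s using Finset.strongInduction with
  | _ s ih =>
    intro k hk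
    rcases Finset.eq_empty_or_nonempty s with rfl | hne
    · simp only [Finset.sum_empty, Nat.le_zero] at hk
      exact ⟨∅, Finset.Subset.refl _, by simp [hk]⟩
    · set d := s.max' hne with hd
      have hds : d ∈ s := s.max'_mem hne
      have hmax : ∀ e ∈ s, e ≤ d := fun e he => s.le_max' e he
      have herase_sub : s.erase d ⊂ s := Finset.erase_ssubset hds
      have hfilter : ∀ d' ∈ s.erase d, (s.erase d).filter (· < d') = s.filter (· < d') := by
        intro d' hd'
        ext e
        simp only [Finset.mem_filter, Finset.mem_erase]
        constructor
        · rintro ⟨⟨_, he⟩, hlt⟩; exact ⟨he, hlt⟩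
        · rintro ⟨he, hlt⟩
          refine ⟨⟨?_, he⟩, hlt⟩
          rintro rfl
          exact absurd (hlt.trans_le (hmax d' (Finset.mem_of_mem_erase hd'))) (lt_irrefl _)
      have hs' : ∀ d' ∈ s.erase d, d' ≤ 1 + ∑ e ∈ (s.erase d).filter (· < d'), e := by
        intro d' hd'
        rw [hfilter d' hd']
        exact hs d' (Finset.mem_of_mem_erase hd')
      have hsum : ∑ e ∈ s, e = d + ∑ e ∈ s.erase d, e := by
        simpa using (Finset.add_sum_erase s (fun x => x) hds).symm
      by_cases hkd : d ≤ k
      · have h1 : k - d ≤ ∑ e ∈ s.erase d, e := by omega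
        obtain ⟨t, hts, hsum_t⟩ := ih _ herase_sub hs' (k - d) h1
        refine ⟨insert d t, ?_, ?_⟩
        · exact Finset.insert_subset hds (hts.trans (Finset.erase_subset _ _))
        · rw [Finset.sum_insert (fun h => (Finset.mem_erase.mp (hts h)).1 rfl)]
          omega
      · have h2 : s.filter (· < d) ⊆ s.erase d := by
          intro e he
          simp only [Finset.mem_filter] at he
          exact Finset.mem_erase.mpr ⟨Nat.ne_of_lt he.2, he.1⟩
        have h3 : k ≤ ∑ e ∈ s.erase d, e := by
          have h5 := hs d hds
          have h4 : ∑ e ∈ s.filter (· < d), e ≤ ∑ e ∈ s.erase d, e :=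
            Finset.sum_le_sum_of_subset h2
          omega
        obtain ⟨t, hts, hsum_t⟩ := ih _ herase_sub hs' k h3
        exact ⟨t, hts.trans (Finset.erase_subset _ _), hsum_t⟩

lemma practical_rep (n : ℕ) (hn : Practical n) :
    ∀ k ≤ sigma n, ∃ t ⊆ n.divisors, ∑ e ∈ t, e = k := by
  apply subsetSum_complete
  intro d hd
  have hd1 : 1 ≤ d := Nat.pos_of_mem_divisors hd
  have hdn : d ≤ n := Nat.le_of_dvd hn.1 (Nat.dvd_of_mem_divisors hd)
  rcases Nat.eq_or_lt_of_le hd1 with h1 | h1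
  · omega
  · obtain ⟨t, hts, hsum⟩ := hn.2 (d - 1) (by omega) (by omega)
    have ht' : t ⊆ n.divisors.filter (· < d) := by
      intro e he
      refine Finset.mem_filter.mpr ⟨hts he, ?_⟩
      have h6 : e ≤ ∑ x ∈ t, x := Finset.single_le_sum (fun i _ => Nat.zero_le i) he
      omega
    have h7 : ∑ e ∈ t, e ≤ ∑ e ∈ n.divisors.filter (· < d), e :=
      Finset.sum_le_sum_of_subset ht'
    omega

lemma practical_mul_aux (n : ℕ) (hn : Practical n) (m : ℕ) (hm : 0 < m)
    (hms : m ≤ sigma n + 1) : Practical (m * n) := by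
  have hn0 := hn.1
  have hnsigma : n ≤ sigma n := by
    have : n ∈ n.divisors := Nat.mem_divisors_self n hn0.ne'
    exact Finset.single_le_sum (fun i _ => Nat.zero_le i) this
  refine ⟨Nat.mul_pos hm hn0, ?_⟩
  intro k hk1 hk2
  have hr : k % m < m := Nat.mod_lt _ hm
  have hq : k / m ≤ n := by
    have := Nat.div_le_div_right (c := m) hk2
    rwa [Nat.mul_div_cancel_left n hm] at this
  obtain ⟨T, hT, hTsum⟩ := practical_rep n hn (k / m) (hq.trans hnsigma)
  obtain ⟨U, hU, hUsum⟩ := practical_rep n hn (k % m) (by omega)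
  have hdisj : Disjoint (T.image (m * ·)) U := by
    rw [Finset.disjoint_left]
    rintro e he heU
    obtain ⟨a, haT, rfl⟩ := Finset.mem_image.mp he
    have ha1 : 1 ≤ a := Nat.pos_of_mem_divisors (hT haT)
    have h8 : m * a ≤ ∑ x ∈ U, x := Finset.single_le_sum (fun i _ => Nat.zero_le i) heU
    have h9 : m ≤ m * a := Nat.le_mul_of_pos_right m ha1
    omega
  refine ⟨T.image (m * ·) ∪ U, ?_, ?_⟩
  · intro e he
    rcases Finset.mem_union.mp he with he | he
    · obtain ⟨a, haT, rfl⟩ := Finset.mem_image.mp he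
      exact Nat.mem_divisors.mpr ⟨mul_dvd_mul_left m (Nat.dvd_of_mem_divisors (hT haT)),
        (Nat.mul_pos hm hn0).ne'⟩
    · exact Nat.mem_divisors.mpr ⟨(Nat.dvd_of_mem_divisors (hU he)).trans ⟨m, (mul_comm m n)⟩,
        (Nat.mul_pos hm hn0).ne'⟩
  · rw [Finset.sum_union hdisj, Finset.sum_image
      (fun a _ b _ h => Nat.eq_of_mul_eq_mul_left hm h), ← Finset.mul_sum, hTsum, hUsum]
    exact Nat.div_add_mod k m

/-- If `n` is practical and `1 ≤ m ≤ σ(n) + 1` then `m * n` is practical; in particular,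
if `p` is a prime with `p ≤ σ(n) + 1`, then `n * p` is practical. -/
theorem practical_mul (n : ℕ) (hn : Practical n) :
    (∀ m : ℕ, 0 < m → m ≤ sigma n + 1 → Practical (m * n)) ∧
    (∀ p : ℕ, p.Prime → p ≤ sigma n + 1 → Practical (n * p)) := by
  refine ⟨fun m hm hms => practical_mul_aux n hn m hm hms, fun p hp hps => ?_⟩
  rw [mul_comm]
  exact practical_mul_aux n hn p hp.pos hps
end

section
/- If n is practical then σ(n) + 1 ≥ 2n. -/
/-- If `n` is practical then `σ(n) + 1 ≥ 2n`. -/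
theorem sigma_ge_of_practical (n : ℕ) (hn : Practical n) : 2 * n ≤ sigma n + 1 := by
  obtain ⟨hpos, h⟩ := hn
  rcases Nat.lt_or_ge n 2 with h2 | h2
  · interval_cases n
    simp [sigma]
  · obtain ⟨s, hs, hsum⟩ := h (n - 1) (by omega) (by omega)
    have hn_mem : n ∈ n.divisors := Nat.mem_divisors_self n (by omega)
    have hns : n ∉ s := by
      intro hmem
      have hle : n ≤ ∑ d ∈ s, d :=
        Finset.single_le_sum (f := fun d => d) (fun i _ => Nat.zero_le i) hmem
      omega
    have hsub : insert n s ⊆ n.divisors := Finset.insert_subset hn_mem hs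
    have hle : ∑ d ∈ insert n s, d ≤ sigma n :=
      Finset.sum_le_sum_of_subset hsub
    rw [Finset.sum_insert hns, hsum] at hle
    omega
end

section
/- Let θ be an arithmetic function with θ(n) ≥ 2 for all n, satisfying θ(mn) ≤ C m^A θ(n) for all m, n ≥ 1 (for some constants A, C). If d and k are positive integers with kd ∈ B_θ, then k ∈ B_{θ_d}, where θ_d(n) = C d^A θ(n). -/
/-- `n ∈ B_θ`: `n ≥ 1` and every prime `p` dividing `n` satisfies
`p ≤ θ(∏_{q prime, q < p, q ∣ n} q^{v_q(n)})`. -/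
def BTheta (θ : ℕ → ℝ) (n : ℕ) : Prop :=
  0 < n ∧ ∀ p : ℕ, p.Prime → p ∣ n →
    (p : ℝ) ≤ θ (∏ q ∈ n.primeFactors.filter (fun q => q < p), q ^ n.factorization q)

/-- If `θ ≥ 2` and `θ(mn) ≤ C m^A θ(n)`, then `kd ∈ B_θ` implies `k ∈ B_{θ_d}`
where `θ_d(n) = C d^A θ(n)`. -/
theorem mem_BTheta_of_dvd (θ : ℕ → ℝ) (A C : ℝ) (hθ2 : ∀ n : ℕ, 2 ≤ θ n)
    (hθ : ∀ m n : ℕ, 1 ≤ m → 1 ≤ n → θ (m * n) ≤ C * (m : ℝ) ^ A * θ n)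
    (d k : ℕ) (hd : 0 < d) (hk : 0 < k) (h : BTheta θ (k * d)) :
    BTheta (fun n => C * (d : ℝ) ^ A * θ n) k := by
  -- C ≥ 1
  have hC : 1 ≤ C := by
    have := hθ 1 1 le_rfl le_rfl
    rw [mul_one, Nat.cast_one, Real.one_rpow, mul_one] at this
    nlinarith [hθ2 1]
  -- A ≥ 0
  have hA : 0 ≤ A := by
    by_contra hA
    push_neg at hA
    have h2 : ∀ m : ℕ, 1 ≤ m → (2 : ℝ) ≤ C * (m : ℝ) ^ A * θ 1 := by
      intro m hm
      have := hθ m 1 hm le_rfl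
      rw [mul_one] at this
      linarith [hθ2 m]
    have ht0 : Filter.Tendsto (fun x : ℝ => x ^ A) Filter.atTop (nhds 0) := by
      have := tendsto_rpow_neg_atTop (by linarith : (0:ℝ) < -A)
      simpa using this
    have ht : Filter.Tendsto (fun m : ℕ => C * (m : ℝ) ^ A * θ 1) Filter.atTop
        (nhds 0) := by
      have := ((ht0.comp tendsto_natCast_atTop_atTop).const_mul C).mul_const (θ 1)
      simpa using this
    have := (ht.eventually (gt_mem_nhds (by norm_num : (0:ℝ) < 2))).and
      (Filter.eventually_atTop.2 ⟨1, fun m hm => hm⟩)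
    obtain ⟨m, hlt, hm⟩ := this.exists
    exact absurd (h2 m hm) (not_le.2 hlt)
  refine ⟨hk, fun p hp hpk => ?_⟩
  have hkd : k * d ≠ 0 := by positivity
  have hN := h.2 p hp (hpk.mul_right d)
  set S := (k * d).primeFactors.filter (fun q => q < p) with hS
  set M := ∏ q ∈ k.primeFactors.filter (fun q => q < p), q ^ k.factorization q with hM
  set L := ∏ q ∈ S, q ^ d.factorization q with hL
  have hqprime : ∀ q ∈ S, q.Prime := fun q hq =>
    Nat.prime_of_mem_primeFactors (Finset.mem_filter.1 hq).1
  -- M as a product over S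
  have hMS : M = ∏ q ∈ S, q ^ k.factorization q := by
    rw [hM]
    refine Finset.prod_subset ?_ ?_
    · intro q hq
      rw [Finset.mem_filter] at hq ⊢
      exact ⟨Nat.primeFactors_mono (dvd_mul_right k d) hkd hq.1, hq.2⟩
    · intro q hq hq'
      have hqk : q ∉ k.primeFactors := by
        intro hmem
        exact hq' (Finset.mem_filter.2 ⟨hmem, (Finset.mem_filter.1 hq).2⟩)
      rw [← Nat.support_factorization, Finsupp.notMem_support_iff] at hqk
      rw [hqk, pow_zero]
  -- The product for kd splits as L * M
  have hsplit : (∏ q ∈ S, q ^ (k * d).factorization q) = L * M := by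
    rw [hL, hMS, ← Finset.prod_mul_distrib]
    refine Finset.prod_congr rfl fun q hq => ?_
    rw [Nat.factorization_mul hk.ne' hd.ne']
    simp [pow_add, mul_comm]
  -- L divides d
  have hLd : L ∣ d := by
    have h1 : L = ∏ q ∈ S ∩ d.primeFactors, q ^ d.factorization q := by
      rw [hL]
      refine (Finset.prod_subset Finset.inter_subset_left ?_).symm
      intro q hq hq'
      have : q ∉ d.primeFactors := fun hm => hq' (Finset.mem_inter.2 ⟨hq, hm⟩)
      rw [← Nat.support_factorization, Finsupp.notMem_support_iff] at this
      rw [this, pow_zero]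
    rw [h1]
    calc (∏ q ∈ S ∩ d.primeFactors, q ^ d.factorization q)
        ∣ ∏ q ∈ d.primeFactors, q ^ d.factorization q :=
          Finset.prod_dvd_prod_of_subset _ _ _ Finset.inter_subset_right
      _ = d := Nat.factorization_prod_pow_eq_self hd.ne'
  have hL1 : 1 ≤ L := by
    rw [hL]
    exact Finset.one_le_prod' fun q hq => Nat.one_le_pow _ _ (hqprime q hq).pos
  have hM1 : 1 ≤ M := by
    rw [hMS]
    exact Finset.one_le_prod' fun q hq => Nat.one_le_pow _ _ (hqprime q hq).pos
  have hLled : (L : ℝ) ≤ d := Nat.cast_le.2 (Nat.le_of_dvd hd hLd)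
  have key : θ (L * M) ≤ C * (d : ℝ) ^ A * θ M := by
    calc θ (L * M) ≤ C * (L : ℝ) ^ A * θ M := hθ L M hL1 hM1
      _ ≤ C * (d : ℝ) ^ A * θ M := by
          have hrp : (L : ℝ) ^ A ≤ (d : ℝ) ^ A :=
            Real.rpow_le_rpow (by positivity) hLled hA
          have hθM : 0 ≤ θ M := by linarith [hθ2 M]
          have h0C : (0:ℝ) ≤ C := by linarith
          exact mul_le_mul_of_nonneg_right (mul_le_mul_of_nonneg_left hrp h0C) hθM
  rw [hsplit] at hN
  exact le_trans hN key
end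

section
/- Let θ be an arithmetic function with θ(n) ≥ 2 for all n, and let f be an increasing function with θ(n) ≤ n f(n) for all n ≥ 1. If n ∈ B_{zθ} (meaning n satisfies the condition with θ replaced by z·θ, where z ≥ 1) and n ≤ x, then every prime p dividing n satisfies p² ≤ z x f(x). -/
/-- If `θ ≥ 2`, `f` is increasing with `θ(n) ≤ n f(n)`, `z ≥ 1`, `n ∈ B_{zθ}` and `n ≤ x`,
then every prime `p ∣ n` has `p² ≤ z x f(x)`. -/
theorem prime_sq_le (θ : ℕ → ℝ) (f : ℕ → ℝ) (hθ2 : ∀ n : ℕ, 2 ≤ θ n)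
    (hf : Monotone f) (hθf : ∀ n : ℕ, 1 ≤ n → θ n ≤ (n : ℝ) * f n)
    (z : ℝ) (hz : 1 ≤ z) (n x : ℕ) (hn : BTheta (fun m => z * θ m) n) (hnx : n ≤ x)
    (p : ℕ) (hp : p.Prime) (hpn : p ∣ n) :
    ((p : ℝ)) ^ 2 ≤ z * (x : ℝ) * f x := by
  obtain ⟨hn0, hB⟩ := hn
  set m : ℕ := ∏ q ∈ n.primeFactors.filter (fun q => q < p), q ^ n.factorization q with hm
  have hple : (p : ℝ) ≤ z * θ m := hB p hp hpn
  -- m divides n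
  have hmd : m ∣ n := by
    have h1 : m ∣ ∏ q ∈ n.primeFactors, q ^ n.factorization q :=
      Finset.prod_dvd_prod_of_subset _ _ _ (Finset.filter_subset _ _)
    have h2 : ∏ q ∈ n.primeFactors, q ^ n.factorization q = n := by
      have := Nat.factorization_prod_pow_eq_self hn0.ne'
      simpa [Finsupp.prod] using this
    rwa [h2] at h1
  -- p does not divide m
  have hpm : ¬ p ∣ m := by
    intro hdvd
    obtain ⟨q, hq, hpq⟩ := hp.prime.exists_mem_finset_dvd hdvd
    rw [Finset.mem_filter] at hq
    have hqp : q.Prime := Nat.prime_of_mem_primeFactors hq.1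
    have := (Nat.prime_dvd_prime_iff_eq hp hqp).mp (hp.dvd_of_dvd_pow hpq)
    omega
  have hm0 : 0 < m := Nat.pos_of_dvd_of_pos hmd hn0
  -- m * p divides n
  have hmpd : m * p ∣ n :=
    Nat.Coprime.mul_dvd_of_dvd_of_dvd ((hp.coprime_iff_not_dvd.mpr hpm).symm) hmd hpn
  have hmp_le : (m : ℝ) * p ≤ (x : ℝ) := by
    have : m * p ≤ x := le_trans (Nat.le_of_dvd hn0 hmpd) hnx
    exact_mod_cast this
  have hmx : m ≤ x := le_trans (Nat.le_of_dvd hn0 hmd) hnx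
  have hfm : f m ≤ f x := hf hmx
  have hθm : θ m ≤ (m : ℝ) * f m := hθf m hm0
  have hfm0 : 0 < f m := by
    have h2 : (2 : ℝ) ≤ (m : ℝ) * f m := le_trans (hθ2 m) hθm
    have hm0' : (0 : ℝ) < m := by exact_mod_cast hm0
    nlinarith
  have hfx0 : 0 < f x := lt_of_lt_of_le hfm0 hfm
  have hz0 : (0 : ℝ) < z := lt_of_lt_of_le one_pos hz
  have hm0' : (0 : ℝ) < m := by exact_mod_cast hm0
  have hp0 : (0 : ℝ) < p := by exact_mod_cast hp.pos
  have key : (p : ℝ) ≤ z * ((m : ℝ) * f x) := by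
    calc (p : ℝ) ≤ z * θ m := hple
      _ ≤ z * ((m : ℝ) * f m) := by gcongr
      _ ≤ z * ((m : ℝ) * f x) := by gcongr
  calc ((p : ℝ)) ^ 2 = (p : ℝ) * p := by ring
    _ ≤ (z * ((m : ℝ) * f x)) * p := by gcongr
    _ = z * ((m : ℝ) * p) * f x := by ring
    _ ≤ z * (x : ℝ) * f x := by gcongr
end

section
/- Every even positive integer is the sum of two practical numbers. -/
namespace MelfiProof

/-- Sum of divisors. -/
def sdiv (n : ℕ) : ℕ := ∑ d ∈ n.divisors, d

lemma le_sdiv {n : ℕ} (hn : 0 < n) : n ≤ sdiv n :=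
  Finset.single_le_sum (f := fun d => d) (fun i _ => Nat.zero_le i)
    (Nat.mem_divisors_self n hn.ne')

/-- Greedy representation lemma for "complete" finite sets of naturals. -/
lemma greedy (D : Finset ℕ)
    (hD : ∀ d ∈ D, d ≤ 1 + ∑ e ∈ D.filter (fun e => e < d), e) :
    ∀ r, r ≤ ∑ d ∈ D, d → ∃ s ⊆ D, ∑ d ∈ s, d = r := by
  induction D using Finset.strongInduction with
  | _ D ih =>
    intro r hr
    rcases Nat.eq_zero_or_pos r with rfl | hpos
    · exact ⟨∅, Finset.empty_subset D, by simp⟩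
    have hne : D.Nonempty := by
      rcases Finset.eq_empty_or_nonempty D with rfl | h
      · simp at hr; omega
      · exact h
    set d := D.max' hne with hd
    have hdD : d ∈ D := D.max'_mem hne
    have hsub : D.erase d ⊂ D := Finset.erase_ssubset hdD
    have hfilter_eq : ∀ e ∈ D,
        (D.erase d).filter (fun x => x < e) = D.filter (fun x => x < e) := by
      intro e he
      ext x
      simp only [Finset.mem_filter, Finset.mem_erase]
      constructor
      · rintro ⟨⟨_, hx⟩, hlt⟩; exact ⟨hx, hlt⟩
      · rintro ⟨hx, hlt⟩
        refine ⟨⟨?_, hx⟩, hlt⟩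
        rintro rfl
        exact absurd (Finset.le_max' D e he) (by omega)
    have hD' : ∀ e ∈ D.erase d, e ≤ 1 + ∑ x ∈ (D.erase d).filter (fun x => x < e), x := by
      intro e he
      rw [hfilter_eq e (Finset.mem_of_mem_erase he)]
      exact hD e (Finset.mem_of_mem_erase he)
    have hsum : ∑ x ∈ D, x = d + ∑ x ∈ D.erase d, x :=
      (Finset.add_sum_erase D (fun x => x) hdD).symm
    rcases le_or_gt d r with hcase | hcase
    · obtain ⟨s, hs, hsum'⟩ := ih _ hsub hD' (r - d) (by omega)
      have hds : d ∉ s := fun hmem => (Finset.mem_erase.mp (hs hmem)).1 rfl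
      refine ⟨insert d s, Finset.insert_subset hdD (hs.trans (Finset.erase_subset d D)), ?_⟩
      rw [Finset.sum_insert hds, hsum']
      omega
    · have h1 : r ≤ ∑ e ∈ D.filter (fun e => e < d), e := by
        have := hD d hdD; omega
      have h2 : ∑ e ∈ D.filter (fun e => e < d), e ≤ ∑ x ∈ D.erase d, x := by
        apply Finset.sum_le_sum_of_subset
        intro x hx
        simp only [Finset.mem_filter] at hx
        exact Finset.mem_erase.mpr ⟨Nat.ne_of_lt hx.2, hx.1⟩
      obtain ⟨s, hs, h⟩ := ih _ hsub hD' r (h1.trans h2)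
      exact ⟨s, hs.trans (Finset.erase_subset d D), h⟩

/-- A practical number represents every value up to the sum of its divisors. -/
lemma sigma_rep {m : ℕ} (hm : Practical m) :
    ∀ r, r ≤ sdiv m → ∃ s ⊆ m.divisors, ∑ d ∈ s, d = r := by
  apply greedy
  intro d hd
  have hd1 : 1 ≤ d := Nat.pos_of_mem_divisors hd
  have hdm : d ≤ m := Nat.divisor_le hd
  rcases Nat.lt_or_ge d 2 with h | h
  · omega
  · obtain ⟨s, hs, hsum⟩ := hm.2 (d - 1) (by omega) (by omega)
    have hsub : s ⊆ m.divisors.filter (fun e => e < d) := by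
      intro e he
      refine Finset.mem_filter.mpr ⟨hs he, ?_⟩
      have he2 : e ≤ ∑ x ∈ s, x :=
        Finset.single_le_sum (f := fun x => x) (fun i _ => Nat.zero_le i) he
      omega
    have h2 : ∑ x ∈ s, x ≤ ∑ e ∈ m.divisors.filter (fun e => e < d), e :=
      Finset.sum_le_sum_of_subset hsub
    omega

/-- Key multiplication lemma: if `m` is practical and `1 ≤ k ≤ σ(m)+1` then `m*k` is practical. -/
lemma practical_mul {m k : ℕ} (hm : Practical m) (hk1 : 1 ≤ k)
    (hk : k ≤ sdiv m + 1) : Practical (m * k) := by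
  have hm0 : 0 < m := hm.1
  have hmk0 : 0 < m * k := Nat.mul_pos hm0 hk1
  refine ⟨hmk0, ?_⟩
  intro t ht1 htmk
  have hdivmem : ∀ x, x ∣ m → x ∈ (m * k).divisors := fun x hx =>
    Nat.mem_divisors.mpr ⟨hx.mul_right k, hmk0.ne'⟩
  have hdm : k * (t / k) + t % k = t := Nat.div_add_mod t k
  set s0 := t / k with hs0d
  set r0 := t % k with hr0d
  have hr : r0 < k := by rw [hr0d]; exact Nat.mod_lt _ (by omega)
  have hs0 : s0 ≤ m := by
    rw [hs0d]
    have h1 : t / k ≤ m * k / k := Nat.div_le_div_right htmk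
    rwa [Nat.mul_div_cancel _ (by omega)] at h1
  obtain ⟨A, hA, hAsum⟩ := sigma_rep hm r0 (by omega)
  rcases Nat.eq_zero_or_pos s0 with hq0 | hq1
  · have ht : r0 = t := by
      have e : k * s0 = 0 := by rw [hq0]; ring
      omega
    refine ⟨A, ?_, by rw [hAsum, ht]⟩
    intro x hx
    exact hdivmem x (Nat.dvd_of_mem_divisors (hA hx))
  · obtain ⟨B, hB, hBsum⟩ := hm.2 s0 hq1 hs0
    set C := B.image (fun b => b * k) with hC
    have hinj : ∀ x ∈ B, ∀ y ∈ B, x * k = y * k → x = y := fun x _ y _ h =>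
      Nat.eq_of_mul_eq_mul_right (by omega) h
    have hCsum : ∑ x ∈ C, x = s0 * k := by
      rw [hC, Finset.sum_image hinj, ← Finset.sum_mul, hBsum]
    have hdisj : Disjoint A C := by
      rw [Finset.disjoint_left]
      intro x hxA hxC
      have hxr : x ≤ ∑ d ∈ A, d :=
        Finset.single_le_sum (f := fun d => d) (fun i _ => Nat.zero_le i) hxA
      obtain ⟨b, hbB, rfl⟩ := Finset.mem_image.mp hxC
      have hb1 : 1 ≤ b := Nat.pos_of_mem_divisors (hB hbB)
      have hbk : k ≤ b * k := Nat.le_mul_of_pos_left k hb1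
      omega
    refine ⟨A ∪ C, ?_, ?_⟩
    · intro x hx
      rcases Finset.mem_union.mp hx with h | h
      · exact hdivmem x (Nat.dvd_of_mem_divisors (hA h))
      · obtain ⟨b, hbB, rfl⟩ := Finset.mem_image.mp h
        exact Nat.mem_divisors.mpr
          ⟨mul_dvd_mul (Nat.dvd_of_mem_divisors (hB hbB)) dvd_rfl, hmk0.ne'⟩
    · rw [Finset.sum_union hdisj, hAsum, hCsum]
      have e : k * s0 = s0 * k := by ring
      omega

lemma practical_one : Practical 1 := by
  refine ⟨one_pos, ?_⟩
  intro t h1 h2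
  have ht : t = 1 := by omega
  subst ht
  exact ⟨{1}, by simp [Nat.divisors_one], by simp⟩

lemma geom_two (a : ℕ) : (∑ i ∈ Finset.range a, 2^i) + 1 = 2^a := by
  induction a with
  | zero => simp
  | succ a ih =>
    rw [Finset.sum_range_succ]
    have : 2^(a+1) = 2^a * 2 := by rw [pow_succ]
    omega

lemma practical_two_pow (a : ℕ) : Practical (2^a) := by
  induction a with
  | zero => simpa using practical_one
  | succ a ih =>
    have h1 : 0 < 2^a := Nat.pow_pos (by norm_num)
    have h2 : (2:ℕ) ≤ sdiv (2^a) + 1 := by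
      have := le_sdiv h1; omega
    have := practical_mul ih (by norm_num) h2
    rwa [← pow_succ] at this

lemma sdiv_two_pow (a : ℕ) : 2^(a+1) ≤ sdiv (2^a) + 1 := by
  have h20 : 0 < 2^a := Nat.pow_pos (by norm_num)
  have hinj : ∀ x ∈ Finset.range (a+1), ∀ y ∈ Finset.range (a+1), 2^x = 2^y → x = y :=
    fun x _ y _ h => Nat.pow_right_injective (le_refl 2) h
  have hsub : (Finset.range (a+1)).image (fun i => 2^i) ⊆ (2^a).divisors := by
    intro x hx
    obtain ⟨i, hi, rfl⟩ := Finset.mem_image.mp hx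
    have hia : i ≤ a := by simpa using Nat.lt_succ_iff.mp (Finset.mem_range.mp hi)
    exact Nat.mem_divisors.mpr ⟨pow_dvd_pow 2 hia, h20.ne'⟩
  have h1 : ∑ x ∈ (Finset.range (a+1)).image (fun i => 2^i), x
      = ∑ i ∈ Finset.range (a+1), 2^i := Finset.sum_image hinj
  have h3 : ∑ x ∈ (Finset.range (a+1)).image (fun i => 2^i), x ≤ sdiv (2^a) :=
    Finset.sum_le_sum_of_subset hsub
  have h4 := geom_two (a+1)
  omega

/-- `2^v * 3^j` is practical when `v ≥ 1`. -/
lemma practical_2v3 {v : ℕ} (j : ℕ) (hv : 1 ≤ v) : Practical (2^v * 3^j) := by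
  induction j with
  | zero => simpa using practical_two_pow v
  | succ j ih =>
    have hm : 0 < 2^v * 3^j := by positivity
    have h2 : 2 ≤ 2^v * 3^j := by
      have ha : 2 ≤ 2^v := by
        calc 2 = 2^1 := (pow_one 2).symm
        _ ≤ 2^v := Nat.pow_le_pow_right (by norm_num) hv
      calc 2 ≤ 2^v := ha
      _ ≤ 2^v * 3^j := Nat.le_mul_of_pos_right _ (by positivity)
    have h3 : (3:ℕ) ≤ sdiv (2^v * 3^j) + 1 := by
      have := le_sdiv hm; omega
    have := practical_mul ih (by norm_num) h3
    have e : 2^v * 3^j * 3 = 2^v * 3^(j+1) := by ring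
    rwa [e] at this

lemma six_le {v j : ℕ} (hv : 1 ≤ v) (hj : 1 ≤ j) : 6 ≤ 2^v * 3^j := by
  have ha : 2 ≤ 2^v := by
    calc 2 = 2^1 := (pow_one 2).symm
    _ ≤ 2^v := Nat.pow_le_pow_right (by norm_num) hv
  have hb : 3 ≤ 3^j := by
    calc 3 = 3^1 := (pow_one 3).symm
    _ ≤ 3^j := Nat.pow_le_pow_right (by norm_num) hj
  calc 6 = 2 * 3 := by norm_num
  _ ≤ 2^v * 3^j := Nat.mul_le_mul ha hb

/-- `2^v * (5 * 3^j)` is practical when `v ≥ 1`, `j ≥ 1`. -/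
lemma practical_2v35 {v j : ℕ} (hv : 1 ≤ v) (hj : 1 ≤ j) : Practical (2^v * (5 * 3^j)) := by
  have hm : 0 < 2^v * 3^j := by positivity
  have h5 : (5:ℕ) ≤ sdiv (2^v * 3^j) + 1 := by
    have := le_sdiv hm
    have := six_le hv hj
    omega
  have := practical_mul (practical_2v3 j hv) (by norm_num) h5
  have e : 2^v * 3^j * 5 = 2^v * (5 * 3^j) := by ring
  rwa [e] at this

def G (j : ℕ) : ℕ := ∑ i ∈ Finset.range (j+1), 3^i

lemma twoG (j : ℕ) : 2 * G j + 1 = 3^(j+1) := by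
  induction j with
  | zero => simp [G]
  | succ j ih =>
    have e : G (j+1) = G j + 3^(j+1) := Finset.sum_range_succ _ _
    have e2 : 3^(j+2) = 3^(j+1) * 3 := by rw [pow_succ]
    omega

lemma G_pos (j : ℕ) : 1 ≤ G j := by
  have := twoG j
  omega

lemma odd_pow3 (j : ℕ) : ¬ 2 ∣ 3^j := by
  intro h
  have := Nat.Prime.dvd_of_dvd_pow Nat.prime_two h
  omega

/-- divisor-sum lower bound for `2^v * 3^j`. -/
lemma sb1 {v : ℕ} (j : ℕ) (hv : 1 ≤ v) : 3 * G j ≤ sdiv (2^v * 3^j) := by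
  set N := 2^v * 3^j with hN
  have hN0 : N ≠ 0 := by positivity
  have hinj1 : ∀ x ∈ Finset.range (j+1), ∀ y ∈ Finset.range (j+1), 3^x = 3^y → x = y :=
    fun x _ y _ h => Nat.pow_right_injective (by norm_num) h
  have hinj2 : ∀ x ∈ Finset.range (j+1), ∀ y ∈ Finset.range (j+1),
      2 * 3^x = 2 * 3^y → x = y :=
    fun x _ y _ h => Nat.pow_right_injective (a := 3) (by norm_num) (show (3:ℕ)^x = 3^y by omega)
  set S1 := (Finset.range (j+1)).image (fun i => 3^i) with hS1
  set S2 := (Finset.range (j+1)).image (fun i => 2 * 3^i) with hS2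
  have h1 : ∑ x ∈ S1, x = G j := Finset.sum_image hinj1
  have h2 : ∑ x ∈ S2, x = 2 * G j := by
    rw [hS2, Finset.sum_image hinj2, ← Finset.mul_sum]; rfl
  have hdisj : Disjoint S1 S2 := by
    rw [Finset.disjoint_left]
    intro x h1x h2x
    obtain ⟨i, _, rfl⟩ := Finset.mem_image.mp h1x
    obtain ⟨i', _, heq⟩ := Finset.mem_image.mp h2x
    exact odd_pow3 i ⟨3^i', heq.symm⟩
  have hsub : S1 ∪ S2 ⊆ N.divisors := by
    intro x hx
    rcases Finset.mem_union.mp hx with h | h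
    · obtain ⟨i, hi, rfl⟩ := Finset.mem_image.mp h
      have hia : i ≤ j := Nat.lt_succ_iff.mp (Finset.mem_range.mp hi)
      exact Nat.mem_divisors.mpr ⟨dvd_mul_of_dvd_right (pow_dvd_pow 3 hia) _, hN0⟩
    · obtain ⟨i, hi, rfl⟩ := Finset.mem_image.mp h
      have hia : i ≤ j := Nat.lt_succ_iff.mp (Finset.mem_range.mp hi)
      exact Nat.mem_divisors.mpr
        ⟨mul_dvd_mul (dvd_pow_self 2 (by omega)) (pow_dvd_pow 3 hia), hN0⟩
  have h3 : ∑ x ∈ S1 ∪ S2, x ≤ sdiv N := Finset.sum_le_sum_of_subset hsub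
  rw [Finset.sum_union hdisj, h1, h2] at h3
  omega

/-- divisor-sum lower bound for `2^v * (5 * 3^j)`. -/
lemma sb5 {v : ℕ} (j : ℕ) (hv : 1 ≤ v) : 11 * G j ≤ sdiv (2^v * (5 * 3^j)) := by
  set N := 2^v * (5 * 3^j) with hN
  have hN0 : N ≠ 0 := by positivity
  have hinj1 : ∀ x ∈ Finset.range (j+1), ∀ y ∈ Finset.range (j+1), 3^x = 3^y → x = y :=
    fun x _ y _ h => Nat.pow_right_injective (by norm_num) h
  have hinj2 : ∀ x ∈ Finset.range (j+1), ∀ y ∈ Finset.range (j+1),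
      10 * 3^x = 10 * 3^y → x = y :=
    fun x _ y _ h => Nat.pow_right_injective (a := 3) (by norm_num) (show (3:ℕ)^x = 3^y by omega)
  set S1 := (Finset.range (j+1)).image (fun i => 3^i) with hS1
  set S2 := (Finset.range (j+1)).image (fun i => 10 * 3^i) with hS2
  have h1 : ∑ x ∈ S1, x = G j := Finset.sum_image hinj1
  have h2 : ∑ x ∈ S2, x = 10 * G j := by
    rw [hS2, Finset.sum_image hinj2, ← Finset.mul_sum]; rfl
  have hdisj : Disjoint S1 S2 := by
    rw [Finset.disjoint_left]
    intro x h1x h2x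
    obtain ⟨i, _, rfl⟩ := Finset.mem_image.mp h1x
    obtain ⟨i', _, heq⟩ := Finset.mem_image.mp h2x
    exact odd_pow3 i ⟨5 * 3^i', by omega⟩
  have hsub : S1 ∪ S2 ⊆ N.divisors := by
    intro x hx
    rcases Finset.mem_union.mp hx with h | h
    · obtain ⟨i, hi, rfl⟩ := Finset.mem_image.mp h
      have hia : i ≤ j := Nat.lt_succ_iff.mp (Finset.mem_range.mp hi)
      refine Nat.mem_divisors.mpr ⟨?_, hN0⟩
      exact dvd_mul_of_dvd_right (dvd_mul_of_dvd_right (pow_dvd_pow 3 hia) 5) _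
    · obtain ⟨i, hi, rfl⟩ := Finset.mem_image.mp h
      have hia : i ≤ j := Nat.lt_succ_iff.mp (Finset.mem_range.mp hi)
      refine Nat.mem_divisors.mpr ⟨?_, hN0⟩
      have e : 10 * 3^i = 2 * (5 * 3^i) := by ring
      rw [e]
      exact mul_dvd_mul (dvd_pow_self 2 (by omega))
        (mul_dvd_mul_left 5 (pow_dvd_pow 3 hia))
  have h3 : ∑ x ∈ S1 ∪ S2, x ≤ sdiv N := Finset.sum_le_sum_of_subset hsub
  rw [Finset.sum_union hdisj, h1, h2] at h3
  omega

/-- The main construction: split `2^v * q` into two practical numbers. -/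
lemma win {v q R Sb t : ℕ} (hv : 1 ≤ v) (hq : ¬ 2 ∣ q)
    (hP : Practical (2^v * R)) (hodd : ¬ 2 ∣ R) (hR3 : 3 ≤ R)
    (hσ : Sb ≤ sdiv (2^v * R))
    (ht1 : 1 ≤ t) (hcov : R + 2 ≤ 2^(t+2))
    (hlow : 2^t * (R+1) ≤ q) (hhigh : q ≤ R * (Sb + 1)) :
    ∃ x y : ℕ, Practical x ∧ Practical y ∧ 2^v * q = x + y := by
  set T := 2^t with hT
  have hT2 : 2 ≤ T := by
    rw [hT]
    calc (2:ℕ) = 2^1 := (pow_one 2).symm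
    _ ≤ 2^t := Nat.pow_le_pow_right (by norm_num) ht1
  have hTpos : 0 < T := by omega
  have h2T : 2 ∣ T := by
    rw [hT]; exact dvd_pow_self 2 (by omega)
  have hRpos : 0 < R := by omega
  have hcop : Nat.Coprime R T := by
    rw [hT]
    exact (Nat.Prime.coprime_iff_not_dvd Nat.prime_two).mpr hodd |>.symm.pow_right t
  have eTR : T * (R+1) = T * R + T := by ring
  have hqT : T ≤ q := by
    have h0 : T ≤ T * (R + 1) := Nat.le_mul_of_pos_right T (by omega)
    omega
  -- the inverse residue
  set φ := Nat.totient T with hφ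
  have hφ1 : 1 ≤ φ := Nat.totient_pos.mpr hTpos
  set W0 := (q * R ^ (φ - 1)) % T with hW0
  have hW0lt : W0 < T := Nat.mod_lt _ hTpos
  have hRW0q : R * W0 ≡ q [MOD T] := by
    have h1 : R * W0 ≡ R * (q * R^(φ-1)) [MOD T] :=
      Nat.ModEq.mul_left R (Nat.mod_modEq _ T)
    have h2 : R * (q * R^(φ-1)) = q * R^φ := by
      have e : R * R^(φ-1) = R^φ := by
        conv_rhs => rw [← Nat.sub_add_cancel hφ1]
        rw [pow_succ]; ring
      calc R * (q * R^(φ-1)) = q * (R * R^(φ-1)) := by ring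
      _ = q * R^φ := by rw [e]
    have h3 : q * R^φ ≡ q * 1 [MOD T] :=
      Nat.ModEq.mul_left q (Nat.ModEq.pow_totient hcop)
    calc R * W0 ≡ R * (q * R^(φ-1)) [MOD T] := h1
    _ = q * R^φ := h2
    _ ≡ q * 1 [MOD T] := h3
    _ = q := mul_one q
  have hW0pos : 1 ≤ W0 := by
    rcases Nat.eq_zero_or_pos W0 with h0 | h; swap
    · exact h
    exfalso
    have hdvd : T ∣ q * R ^ (φ - 1) := by
      rw [hW0] at h0
      exact Nat.dvd_of_mod_eq_zero h0
    have h2d : 2 ∣ q * R ^ (φ - 1) := dvd_trans h2T hdvd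
    rcases (Nat.Prime.dvd_mul Nat.prime_two).mp h2d with h | h
    · exact hq h
    · exact hodd (Nat.Prime.dvd_of_dvd_pow Nat.prime_two h)
  set U := (q - T) / R with hU
  have hUT : T ≤ U := by
    rw [hU]
    rw [Nat.le_div_iff_mul_le hRpos]
    omega
  have hdm : R * U + (q - T) % R = q - T := by
    rw [hU]; exact Nat.div_add_mod (q - T) R
  have hmod2 : (q - T) % R < R := Nat.mod_lt _ hRpos
  have hRU : R * U ≤ q - T := by omega
  set k0 := (U - W0) / T with hk0
  have hdm0 : T * k0 + (U - W0) % T = U - W0 := by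
    rw [hk0]; exact Nat.div_add_mod (U - W0) T
  have hmod0 : (U - W0) % T < T := Nat.mod_lt _ hTpos
  set W := W0 + T * k0 with hW
  have hW0U : W0 ≤ U := by omega
  have hWU : W ≤ U := by omega
  have hWlow : U < W + T := by omega
  have hW1 : 1 ≤ W := by omega
  have hWmod : W ≡ W0 [MOD T] := by
    have : T ∣ W - W0 := ⟨k0, by omega⟩
    exact ((Nat.modEq_iff_dvd' (by omega)).mpr this).symm
  have hRWq : R * W ≡ q [MOD T] := (hWmod.mul_left R).trans hRW0q
  have hRWle : R * W ≤ q - T := by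
    have := Nat.mul_le_mul_left R hWU
    omega
  have hdvdD : T ∣ q - R * W := (Nat.modEq_iff_dvd' (by omega)).mp hRWq
  set D := q - R * W with hD
  set V := D / T with hV
  have hDV : T * V = D := Nat.mul_div_cancel' hdvdD
  have hTD : T ≤ D := by omega
  have hV1 : 1 ≤ V := by
    rw [hV, Nat.one_le_div_iff hTpos]; exact hTD
  have hVR : V ≤ R := by
    have hWU1 : U + 1 ≤ W + T := by omega
    have hmul : R * (U + 1) ≤ R * (W + T) := Nat.mul_le_mul_left R hWU1
    have e1 : R * (U + 1) = R * U + R := by ring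
    have e2 : R * (W + T) = R * W + R * T := by ring
    have e3 : T * (R + 1) = R * T + T := by ring
    have hDlt : D < T * (R + 1) := by omega
    have : T * V < T * (R + 1) := by omega
    have := Nat.lt_of_mul_lt_mul_left this
    omega
  have hVbound : V ≤ sdiv (2^(v+t)) + 1 := by
    have h1 := sdiv_two_pow (v+t)
    have h2 : 2^(t+2) ≤ 2^(v+t+1) := Nat.pow_le_pow_right (by norm_num) (by omega)
    omega
  have hx : Practical (2^(v+t) * V) := practical_mul (practical_two_pow (v+t)) hV1 hVbound
  have hWσ : W ≤ sdiv (2^v * R) + 1 := by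
    have h1 : R * U ≤ R * (Sb + 1) := by omega
    have h2 : U ≤ Sb + 1 := Nat.le_of_mul_le_mul_left h1 hRpos
    omega
  have hy : Practical ((2^v * R) * W) := practical_mul hP hW1 hWσ
  refine ⟨2^(v+t) * V, (2^v * R) * W, hx, hy, ?_⟩
  have e : 2^(v+t) = 2^v * T := by rw [hT, pow_add]
  have hsum : T * V + R * W = q := by omega
  calc 2^v * q = 2^v * (T * V + R * W) := by rw [hsum]
  _ = 2^v * T * V + (2^v * R) * W := by ring
  _ = 2^(v+t) * V + (2^v * R) * W := by rw [e]

/-- Facts about `t := log2(R+1) - 1`. -/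
lemma logt {R : ℕ} (hR : 3 ≤ R) :
    1 ≤ Nat.log 2 (R+1) - 1 ∧ R + 2 ≤ 2^((Nat.log 2 (R+1) - 1) + 2) ∧
    2^((Nat.log 2 (R+1) - 1) + 1) ≤ R + 1 := by
  set l := Nat.log 2 (R+1) with hl
  have hl2 : 2 ≤ l := by
    rw [hl]
    exact (Nat.le_log_iff_pow_le (by norm_num) (by omega)).mpr (by norm_num; omega)
  have hup : R + 1 < 2^(l+1) := Nat.lt_pow_succ_log_self (by norm_num) (R+1)
  have hlo : 2^l ≤ R + 1 := Nat.pow_log_le_self 2 (by omega)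
  have e1 : l - 1 + 2 = l + 1 := by omega
  have e2 : l - 1 + 1 = l := by omega
  refine ⟨by omega, ?_, ?_⟩
  · rw [e1]; omega
  · rw [e2]; exact hlo

def L (c j : ℕ) : ℕ := 2^(Nat.log 2 (c * 3^j + 1) - 1) * (c * 3^j + 1)

lemma Lle {R : ℕ} (hR : 3 ≤ R) :
    2 * (2^(Nat.log 2 (R+1) - 1) * (R+1)) ≤ (R+1) * (R+1) := by
  obtain ⟨_, _, h3⟩ := logt hR
  calc 2 * (2^(Nat.log 2 (R+1) - 1) * (R+1))
      = 2^((Nat.log 2 (R+1) - 1) + 1) * (R+1) := by rw [pow_succ]; ring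
  _ ≤ (R+1) * (R+1) := Nat.mul_le_mul_right _ h3

lemma pow3_ge {j : ℕ} (hj : 1 ≤ j) : 3 ≤ 3^j := by
  calc (3:ℕ) = 3^1 := (pow_one 3).symm
  _ ≤ 3^j := Nat.pow_le_pow_right (by norm_num) hj

/-- window for `R = 3^j`. -/
lemma window1 {v q : ℕ} (j : ℕ) (hv : 1 ≤ v) (hq : ¬ 2 ∣ q) (hj : 1 ≤ j)
    (hlo : L 1 j ≤ q) (hhi : q ≤ 3^j * (3 * G j + 1)) :
    ∃ x y, Practical x ∧ Practical y ∧ 2^v * q = x + y := by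
  have h3 : 3 ≤ 3^j := pow3_ge hj
  obtain ⟨ht1, hcov, _⟩ := logt h3
  refine win hv hq (practical_2v3 j hv) (odd_pow3 j) h3 (sb1 j hv) ht1 hcov ?_ hhi
  have e : L 1 j = 2^(Nat.log 2 (3^j + 1) - 1) * (3^j + 1) := by
    simp [L]
  omega

/-- window for `R = 5 * 3^j`. -/
lemma window5 {v q : ℕ} (j : ℕ) (hv : 1 ≤ v) (hq : ¬ 2 ∣ q) (hj : 1 ≤ j)
    (hlo : L 5 j ≤ q) (hhi : q ≤ (5 * 3^j) * (11 * G j + 1)) :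
    ∃ x y, Practical x ∧ Practical y ∧ 2^v * q = x + y := by
  have h3 : 3 ≤ 5 * 3^j := by
    have := pow3_ge hj; omega
  have hodd : ¬ 2 ∣ 5 * 3^j := by
    intro h
    rcases (Nat.Prime.dvd_mul Nat.prime_two).mp h with h' | h'
    · omega
    · exact odd_pow3 j h'
  obtain ⟨ht1, hcov, _⟩ := logt h3
  refine win hv hq (practical_2v35 hv hj) hodd h3 (sb5 j hv) ht1 hcov ?_ hhi
  have e : L 5 j = 2^(Nat.log 2 (5 * 3^j + 1) - 1) * (5 * 3^j + 1) := rfl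
  omega

lemma seamA {j : ℕ} (hj : 1 ≤ j) :
    L 5 j ≤ 3^(j+1) * (3 * G (j+1) + 1) + 1 := by
  have hx : 3 ≤ 3^j := pow3_ge hj
  have h3 : 3 ≤ 5 * 3^j := by omega
  have hL := Lle h3
  have hLe : L 5 j = 2^(Nat.log 2 (5 * 3^j + 1) - 1) * (5 * 3^j + 1) := rfl
  have h2G' : 2 * G (j+1) + 1 = 3 * (3 * 3^j) := by
    have h1 := twoG (j+1)
    have e : 3^(j+2) = 3 * (3 * 3^j) := by ring
    omega
  have e31 : 3^(j+1) = 3 * 3^j := by ring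
  rw [e31]
  set x := 3^j with hxd
  set g := G (j+1) with hgd
  have expand : 2 * (3 * x * (3 * g + 1)) + 3 * x = 9 * (x * (2 * g + 1)) := by ring
  have e2 : 9 * (x * (2 * g + 1)) = 81 * (x * x) := by rw [h2G']; ring
  have e3 : (5*x+1) * (5*x+1) = 25 * (x * x) + 10 * x + 1 := by ring
  have hXx : 3 * x ≤ x * x := Nat.mul_le_mul_right x hx
  omega

lemma seamB {j : ℕ} (hj : 1 ≤ j) :
    L 1 (j+2) ≤ (5 * 3^j) * (11 * G j + 1) + 1 := by
  have hx : 3 ≤ 3^j := pow3_ge hj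
  have h3 : 3 ≤ 3^(j+2) := pow3_ge (by omega)
  have hL := Lle h3
  have hLe : L 1 (j+2) = 2^(Nat.log 2 (3^(j+2) + 1) - 1) * (3^(j+2) + 1) := by simp [L]
  have h2G' : 2 * G j + 1 = 3 * 3^j := by
    have h1 := twoG j
    have e : 3^(j+1) = 3 * 3^j := by ring
    omega
  have e32 : 3^(j+2) = 9 * 3^j := by ring
  rw [e32] at hL hLe
  set x := 3^j with hxd
  set g := G j with hgd
  have expand : 2 * ((5 * x) * (11 * g + 1)) + 45 * x = 55 * (x * (2 * g + 1)) := by ring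
  have e2 : 55 * (x * (2 * g + 1)) = 165 * (x * x) := by rw [h2G']; ring
  have e3 : (9*x+1) * (9*x+1) = 81 * (x * x) + 18 * x + 1 := by ring
  have hXx : 3 * x ≤ x * x := Nat.mul_le_mul_right x hx
  omega

lemma Lval {c j v : ℕ} (h1 : 2^v ≤ c * 3^j + 1) (h2 : c * 3^j + 1 < 2^(v+1)) (hv : 1 ≤ v) :
    L c j = 2^(v-1) * (c * 3^j + 1) := by
  have : Nat.log 2 (c * 3^j + 1) = v := Nat.log_eq_of_pow_le_of_lt_pow h1 h2
  rw [L, this]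

lemma covj : ∀ j, 1 ≤ j → ∀ v q, 1 ≤ v → ¬ 2 ∣ q → 8 ≤ q →
    q ≤ (5 * 3^j) * (11 * G j + 1) →
    ∃ x y, Practical x ∧ Practical y ∧ 2^v * q = x + y := by
  intro j
  induction j with
  | zero => omega
  | succ j ih =>
    intro hj1 v q hv hq h8 hup
    rcases Nat.eq_zero_or_pos j with rfl | hj
    · -- base window set: q ≤ 675
      have hG1 : G 1 = 4 := by simp [G, Finset.sum_range_succ]
      have hG2 : G 2 = 13 := by simp [G, Finset.sum_range_succ]
      have hup675 : q ≤ 675 := by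
        have e : (5 * 3^(0+1)) * (11 * G (0+1) + 1) = 675 := by norm_num [hG1]
        omega
      rcases le_or_gt q 39 with h39 | h39
      · refine window1 1 hv hq (by norm_num) ?_ ?_
        · have : L 1 1 = 8 := by
            have := Lval (c := 1) (j := 1) (v := 2) (by norm_num) (by norm_num) (by norm_num)
            simpa using this
          omega
        · have : 3^1 * (3 * G 1 + 1) = 39 := by norm_num [hG1]
          omega
      rcases le_or_gt q 360 with h360 | h360
      · refine window1 2 hv hq (by norm_num) ?_ ?_
        · have : L 1 2 = 40 := by
            have := Lval (c := 1) (j := 2) (v := 3) (by norm_num) (by norm_num) (by norm_num)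
            simpa using this
          omega
        · have : 3^2 * (3 * G 2 + 1) = 360 := by norm_num [hG2]
          omega
      · refine window5 1 hv hq (by norm_num) ?_ ?_
        · have : L 5 1 = 128 := by
            have := Lval (c := 5) (j := 1) (v := 4) (by norm_num) (by norm_num) (by norm_num)
            simpa using this
          omega
        · have : (5 * 3^1) * (11 * G 1 + 1) = 675 := by norm_num [hG1]
          omega
    · -- inductive step
      by_cases hA : q ≤ (5 * 3^j) * (11 * G j + 1)
      · exact ih hj v q hv hq h8 hA
      push_neg at hA
      by_cases hB : q ≤ 3^(j+2) * (3 * G (j+2) + 1)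
      · refine window1 (j+2) hv hq (by omega) ?_ hB
        have hseam := seamB hj
        omega
      · push_neg at hB
        refine window5 (j+1) hv hq (by omega) ?_ hup
        have hseam : L 5 (j+1) ≤ 3^(j+2) * (3 * G (j+2) + 1) + 1 := seamA (by omega)
        omega

lemma cov {v q : ℕ} (hv : 1 ≤ v) (hq : ¬ 2 ∣ q) (h8 : 8 ≤ q) :
    ∃ x y, Practical x ∧ Practical y ∧ 2^v * q = x + y := by
  refine covj q (by omega) v q hv hq h8 ?_
  have h1 : q < 3^q := Nat.lt_pow_self (n := q) (by norm_num)
  have h2 : 3^q ≤ (5 * 3^q) * (11 * G q + 1) := by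
    have := G_pos q
    calc 3^q = 3^q * 1 := (mul_one _).symm
    _ ≤ (5 * 3^q) * (11 * G q + 1) := by
        apply Nat.mul_le_mul <;> omega
  omega

end MelfiProof

open MelfiProof

/-- Melfi: every even positive integer is the sum of two practical numbers. -/
theorem even_eq_add_practical (n : ℕ) (hn : 0 < n) (h2 : 2 ∣ n) :
    ∃ a b : ℕ, Practical a ∧ Practical b ∧ n = a + b := by
  set v := n.factorization 2 with hv
  have hv1 : 1 ≤ v := by
    rw [hv]
    exact Nat.Prime.factorization_pos_of_dvd Nat.prime_two hn.ne' h2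
  obtain ⟨q, hq, hqodd⟩ : ∃ q, 2^v * q = n ∧ ¬ 2 ∣ q :=
    ⟨n / 2^v, Nat.ordProj_mul_ordCompl_eq_self n 2,
      Nat.not_dvd_ordCompl Nat.prime_two hn.ne'⟩
  have hq1 : 1 ≤ q := by
    rcases Nat.eq_zero_or_pos q with rfl | h
    · simp at hq; omega
    · exact h
  rcases lt_or_ge q 9 with hsmall | hbig
  · have hcases : q = 1 ∨ q = 3 ∨ q = 5 ∨ q = 7 := by omega
    have hvpow : 2^(v-1) * 2 = 2^v := by
      have e : v - 1 + 1 = v := by omega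
      rw [← pow_succ, e]
    rcases hcases with rfl | rfl | rfl | rfl
    · refine ⟨2^(v-1), 2^(v-1), practical_two_pow _, practical_two_pow _, ?_⟩
      omega
    · refine ⟨2^v, 2^(v+1), practical_two_pow _, practical_two_pow _, ?_⟩
      have e : 2^(v+1) = 2^v * 2 := by rw [pow_succ]
      omega
    · refine ⟨2^v, 2^(v+2), practical_two_pow _, practical_two_pow _, ?_⟩
      have e : 2^(v+2) = 2^v * 4 := by rw [pow_add]; norm_num
      omega
    · refine ⟨2^v * 3, 2^(v+2), ?_, practical_two_pow _, ?_⟩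
      · have := practical_2v3 1 hv1
        simpa using this
      · have e : 2^(v+2) = 2^v * 4 := by rw [pow_add]; norm_num
        omega
  · obtain ⟨x, y, hx, hy, hxy⟩ := cov hv1 hqodd (by omega)
    exact ⟨x, y, hx, hy, by omega⟩
end

section
/- There exists a constant c > 0 such that for all real x ≥ 3 and all real z with 1 < z < 3, ∑_{n ≤ x} z^{Ω₃(n)} / φ(n) ≤ (c / (3 − z)) · (log x)^z, where Ω₃(n) denotes the number of odd prime factors of n counted with multiplicity. -/
open Finset

/-- The number of odd prime factors of `n`, counted with multiplicity. -/
def Omega3 (n : ℕ) : ℕ := (n / 2 ^ n.factorization 2).primeFactorsList.length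


lemma omega3_eq (n : ℕ) : Omega3 n = ArithmeticFunction.cardFactors (ordCompl[2] n) := by
  rw [ArithmeticFunction.cardFactors_apply]; rfl

lemma omega3_mul {m n : ℕ} (hm : m ≠ 0) (hn : n ≠ 0) :
    Omega3 (m * n) = Omega3 m + Omega3 n := by
  rw [omega3_eq, omega3_eq, omega3_eq, Nat.ordCompl_mul]
  exact ArithmeticFunction.cardFactors_mul (Nat.ordCompl_pos 2 hm).ne' (Nat.ordCompl_pos 2 hn).ne'

lemma omega3_two_pow (k : ℕ) : Omega3 (2 ^ k) = 0 := by
  rw [omega3_eq]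
  have : (2 ^ k).factorization 2 = k := by
    simp [Nat.Prime.factorization_pow Nat.prime_two]
  rw [this, Nat.div_self (Nat.pow_pos (by norm_num))]
  simp

lemma omega3_odd_prime_pow {p : ℕ} (hp : p.Prime) (hp2 : p ≠ 2) (k : ℕ) : Omega3 (p ^ k) = k := by
  rw [omega3_eq]
  have h : (p ^ k).factorization 2 = 0 := by
    rw [Nat.Prime.factorization_pow hp]
    simp [Finsupp.single_apply, hp2]
  rw [h]
  simp [ArithmeticFunction.cardFactors_apply_prime_pow hp]

noncomputable def g (z : ℝ) (n : ℕ) : ℝ := z ^ Omega3 n / (Nat.totient n : ℝ)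

lemma g_nonneg {z : ℝ} (hz : 0 ≤ z) (n : ℕ) : 0 ≤ g z n :=
  div_nonneg (pow_nonneg hz _) (Nat.cast_nonneg _)

lemma g_one (z : ℝ) : g z 1 = 1 := by
  have : Omega3 1 = 0 := by simpa using omega3_two_pow 0
  simp [g, this]

lemma g_zero (z : ℝ) : g z 0 = 0 := by simp [g]

lemma g_mul {z : ℝ} {m n : ℕ} (h : Nat.Coprime m n) : g z (m * n) = g z m * g z n := by
  rcases eq_or_ne m 0 with rfl | hm
  · rcases Nat.coprime_zero_left n |>.mp h with rfl
    simp [g_zero, g_one]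
  rcases eq_or_ne n 0 with rfl | hn
  · rcases Nat.coprime_zero_right m |>.mp h with rfl
    simp [g_zero, g_one]
  unfold g
  rw [omega3_mul hm hn, Nat.totient_mul h, pow_add, Nat.cast_mul, mul_div_mul_comm]

lemma g_two_pow_le {z : ℝ} (k : ℕ) : g z (2 ^ k) ≤ 2 * (1/2 : ℝ) ^ k := by
  unfold g
  rw [omega3_two_pow, pow_zero]
  cases k with
  | zero => norm_num
  | succ k =>
    rw [Nat.totient_prime_pow Nat.prime_two (Nat.succ_pos k)]
    push_cast
    have h : (2:ℝ) * (1/2) ^ (k+1) = 1 / 2 ^ k := by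
      rw [div_pow, one_pow, pow_succ]
      field_simp
    rw [h, mul_one]

lemma g_odd_pow {z : ℝ} {p : ℕ} (hp : p.Prime) (hp2 : p ≠ 2) (k : ℕ) :
    g z (p ^ (k + 1)) = (z / ((p : ℝ) - 1)) * (z / p) ^ k := by
  have hP1 : (1 : ℝ) < (p : ℝ) := by exact_mod_cast hp.one_lt
  have hP0 : (0 : ℝ) < (p : ℝ) := lt_trans one_pos hP1
  unfold g
  rw [omega3_odd_prime_pow hp hp2, Nat.totient_prime_pow hp (Nat.succ_pos k)]
  rw [show k + 1 - 1 = k from rfl]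
  push_cast [Nat.cast_sub hp.one_lt.le]
  rw [div_pow]
  field_simp
  ring

section
variable {z : ℝ} (hz0 : 0 ≤ z) (hz3 : z < 3)

lemma summable_g_two (hz0 : 0 ≤ z) : Summable (fun k ↦ g z (2 ^ k)) :=
  Summable.of_nonneg_of_le (fun k ↦ g_nonneg hz0 _) g_two_pow_le
    ((summable_geometric_of_lt_one (by norm_num) (by norm_num)).mul_left 2)

lemma tsum_g_two_le (hz0 : 0 ≤ z) : ∑' k, g z (2 ^ k) ≤ 4 := by
  have h := Summable.tsum_le_tsum g_two_pow_le (summable_g_two hz0)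
    ((summable_geometric_of_lt_one (by norm_num) (by norm_num)).mul_left 2)
  rw [tsum_mul_left, tsum_geometric_of_lt_one (by norm_num) (by norm_num)] at h
  norm_num at h
  linarith

variable {p : ℕ} (hp : p.Prime) (hp2 : p ≠ 2)

lemma odd_prime_three_le (hp : p.Prime) (hp2 : p ≠ 2) : 3 ≤ p := by
  have h2 := hp.two_le
  omega

lemma ratio_lt_one (hz0 : 0 ≤ z) (hz3 : z < 3) (hp : p.Prime) (hp2 : p ≠ 2) :
    0 ≤ z / p ∧ z / p < 1 := by
  have h3 : (3 : ℝ) ≤ p := by exact_mod_cast odd_prime_three_le hp hp2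
  have hP0 : (0:ℝ) < p := by linarith
  exact ⟨div_nonneg hz0 hP0.le, (div_lt_one hP0).mpr (lt_of_lt_of_le hz3 h3)⟩

lemma summable_g_odd (hz0 : 0 ≤ z) (hz3 : z < 3) (hp : p.Prime) (hp2 : p ≠ 2) :
    Summable (fun k ↦ g z (p ^ k)) := by
  obtain ⟨hr0, hr1⟩ := ratio_lt_one hz0 hz3 hp hp2
  rw [← summable_nat_add_iff 1]
  exact Summable.congr ((summable_geometric_of_lt_one hr0 hr1).mul_left _)
    (fun k ↦ (g_odd_pow hp hp2 k).symm)

lemma tsum_g_odd (hz0 : 0 ≤ z) (hz3 : z < 3) (hp : p.Prime) (hp2 : p ≠ 2) :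
    ∑' k, g z (p ^ k) = 1 + (z / ((p:ℝ) - 1)) * (1 - z / p)⁻¹ := by
  obtain ⟨hr0, hr1⟩ := ratio_lt_one hz0 hz3 hp hp2
  rw [Summable.tsum_eq_zero_add (summable_g_odd hz0 hz3 hp hp2)]
  congr 1
  · rw [pow_zero, g_one]
  · calc ∑' k, g z (p ^ (k + 1)) = ∑' k, (z / ((p:ℝ) - 1)) * (z / p) ^ k := by
          exact tsum_congr fun k ↦ g_odd_pow hp hp2 k
      _ = (z / ((p:ℝ) - 1)) * (1 - z / p)⁻¹ := by
          rw [tsum_mul_left, tsum_geometric_of_lt_one hr0 hr1]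

end


lemma F3_le {z : ℝ} (hz1 : 1 ≤ z) (hz3 : z < 3) :
    1 + (z / ((3:ℝ) - 1)) * (1 - z / 3)⁻¹ ≤ (9/2) / (3 - z) := by
  have h3z : 0 < 3 - z := by linarith
  rw [show (1 : ℝ) - z/3 = (3-z)/3 by ring, inv_div, le_div_iff₀ h3z]
  have : (1 + z / ((3:ℝ) - 1) * (3 / (3-z))) * (3-z) = (3-z) + 3*z/2 := by
    field_simp
    ring
  rw [this]
  linarith

lemma Fp_le {z P : ℝ} (hz1 : 1 ≤ z) (hz3 : z < 3) (hP : 5 ≤ P) :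
    1 + (z / (P - 1)) * (1 - z / P)⁻¹ ≤ Real.exp (z / P + 40 / P ^ 2) := by
  have hP0 : 0 < P := by linarith
  have hPz : 0 < P - z := by linarith
  have hP1 : 0 < P - 1 := by linarith
  rw [show (1 : ℝ) - z/P = (P-z)/P by field_simp, inv_div, div_mul_div_comm]
  have key : z * P / ((P - 1) * (P - z)) ≤ z / P + 40 / P ^ 2 := by
    rw [div_add_div _ _ hP0.ne' (pow_pos hP0 2).ne',
      div_le_div_iff₀ (mul_pos hP1 hPz) (mul_pos hP0 (pow_pos hP0 2))]
    nlinarith [mul_pos hP0 hP0, sq_nonneg (P - 5), sq_nonneg (z - 1), sq_nonneg (z - 3),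
      mul_nonneg (mul_nonneg hP0.le hP0.le) (by linarith : (0:ℝ) ≤ 3 - z),
      mul_nonneg (by linarith : (0:ℝ) ≤ P - 5) (by linarith : (0:ℝ) ≤ 3 - z),
      mul_nonneg (mul_nonneg hP0.le hP0.le) (mul_nonneg (by linarith : (0:ℝ) ≤ P - 5) (by linarith : (0:ℝ) ≤ 3 - z))]
  calc 1 + z * P / ((P - 1) * (P - z)) ≤ 1 + (z / P + 40 / P ^ 2) := by linarith
    _ ≤ Real.exp (z / P + 40 / P ^ 2) := by
        have := Real.add_one_le_exp (z / P + 40 / P ^ 2)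
        linarith

section MertensSection
open Nat

lemma theta_le (n : ℕ) : ∑ p ∈ primesBelow (n+1), Real.log p ≤ n * Real.log 4 := by
  have hcast : ((primorial n : ℕ) : ℝ) = ∏ p ∈ primesBelow (n+1), (p : ℝ) := by
    rw [primorial, primesBelow]
    push_cast
    rfl
  have hpos : (0:ℝ) < ∏ p ∈ primesBelow (n+1), (p : ℝ) := by
    apply Finset.prod_pos
    intro p hp
    exact_mod_cast (prime_of_mem_primesBelow hp).pos
  calc ∑ p ∈ primesBelow (n+1), Real.log p
      = Real.log (∏ p ∈ primesBelow (n+1), (p : ℝ)) := by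
        rw [Real.log_prod]
        intro p hp
        exact_mod_cast (prime_of_mem_primesBelow hp).pos.ne'
    _ ≤ Real.log ((4:ℝ) ^ n) := by
        apply Real.log_le_log hpos
        rw [← hcast]
        exact_mod_cast primorial_le_4_pow n
    _ = n * Real.log 4 := by rw [Real.log_pow]

lemma pow_div_dvd_factorial {p n : ℕ} (hp : p.Prime) : p ^ (n / p) ∣ n ! := by
  rw [Nat.Prime.pow_dvd_factorial_iff hp (Nat.lt_succ_self (Nat.log p n))]
  rcases Nat.lt_or_ge n p with h | h
  · simp [Nat.div_eq_of_lt h]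
  · have h1 : 1 ∈ Finset.Ico 1 (Nat.log p n + 1) := by
      rw [Finset.mem_Ico]
      refine ⟨le_refl 1, ?_⟩
      have := Nat.log_pos hp.one_lt h
      omega
    calc n / p = n / p ^ 1 := by rw [pow_one]
      _ ≤ ∑ i ∈ Finset.Ico 1 (Nat.log p n + 1), n / p ^ i :=
          Finset.single_le_sum (f := fun i ↦ n / p ^ i) (fun i _ ↦ Nat.zero_le _) h1

lemma prod_prime_pow_dvd {s : Finset ℕ} (hs : ∀ p ∈ s, p.Prime) (e : ℕ → ℕ) {m : ℕ}
    (h : ∀ p ∈ s, p ^ e p ∣ m) : (∏ p ∈ s, p ^ e p) ∣ m := by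
  induction s using Finset.induction with
  | empty => simpa using one_dvd m
  | @insert p s hps ih =>
    rw [Finset.prod_insert hps]
    have hp := hs p (Finset.mem_insert_self p s)
    refine Nat.Coprime.mul_dvd_of_dvd_of_dvd ?_ (h p (Finset.mem_insert_self p s))
      (ih (fun q hq ↦ hs q (Finset.mem_insert_of_mem hq)) (fun q hq ↦ h q (Finset.mem_insert_of_mem hq)))
    apply Nat.Coprime.prod_right
    intro q hq
    have hq' := hs q (Finset.mem_insert_of_mem hq)
    exact Nat.Coprime.pow _ _ ((Nat.coprime_primes hp hq').mpr (by rintro rfl; exact hps hq))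

lemma legendre_sum_le (n : ℕ) : ∑ p ∈ primesBelow (n+1), ((n / p : ℕ) : ℝ) * Real.log p
    ≤ Real.log (n !) := by
  set P := ∏ p ∈ primesBelow (n+1), p ^ (n / p) with hP
  have hdvd : P ∣ n ! := prod_prime_pow_dvd (fun p hp ↦ prime_of_mem_primesBelow hp) _
    (fun p hp ↦ pow_div_dvd_factorial (prime_of_mem_primesBelow hp))
  have hPpos : 0 < P := Finset.prod_pos fun p hp ↦ pow_pos (prime_of_mem_primesBelow hp).pos _
  calc ∑ p ∈ primesBelow (n+1), ((n / p : ℕ) : ℝ) * Real.log p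
      = Real.log (P : ℝ) := by
        rw [hP]
        push_cast
        rw [Real.log_prod]
        · apply Finset.sum_congr rfl
          intro p hp
          rw [Real.log_pow]
        · intro p hp
          exact pow_ne_zero _ (by exact_mod_cast (prime_of_mem_primesBelow hp).pos.ne')
    _ ≤ Real.log (n ! : ℝ) := by
        apply Real.log_le_log (by exact_mod_cast hPpos)
        exact_mod_cast Nat.le_of_dvd (Nat.factorial_pos n) hdvd

lemma A_le {n : ℕ} (hn : 1 ≤ n) :
    ∑ p ∈ primesBelow (n+1), Real.log p / p ≤ Real.log n + Real.log 4 := by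
  have hn0 : (0:ℝ) < n := by exact_mod_cast hn
  rw [← mul_le_mul_iff_right₀ hn0, Finset.mul_sum]
  have step : ∀ p ∈ primesBelow (n+1), (n:ℝ) * (Real.log p / p)
      ≤ ((n / p : ℕ) : ℝ) * Real.log p + Real.log p := by
    intro p hp
    have hpp := prime_of_mem_primesBelow hp
    have hp0 : (0:ℝ) < p := by exact_mod_cast hpp.pos
    have hlog : 0 ≤ Real.log p := Real.log_nonneg (by exact_mod_cast hpp.one_lt.le)
    have hdiv : (n:ℝ) / p ≤ ((n / p : ℕ) : ℝ) + 1 := by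
      have h1 : n < p * (n / p) + p := by
        have := Nat.div_add_mod n p
        have := Nat.mod_lt n hpp.pos
        omega
      rw [div_le_iff₀ hp0]
      have h2 : (n:ℝ) < (p:ℝ) * ((n / p : ℕ):ℝ) + p := by exact_mod_cast h1
      push_cast
      nlinarith [h2]
    calc (n:ℝ) * (Real.log p / p) = ((n:ℝ) / p) * Real.log p := by ring
      _ ≤ (((n / p : ℕ) : ℝ) + 1) * Real.log p := by
          exact mul_le_mul_of_nonneg_right hdiv hlog
      _ = ((n / p : ℕ) : ℝ) * Real.log p + Real.log p := by ring
  calc ∑ p ∈ primesBelow (n+1), (n:ℝ) * (Real.log p / p)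
      ≤ ∑ p ∈ primesBelow (n+1), (((n / p : ℕ) : ℝ) * Real.log p + Real.log p) :=
        Finset.sum_le_sum step
    _ = (∑ p ∈ primesBelow (n+1), ((n / p : ℕ) : ℝ) * Real.log p)
        + ∑ p ∈ primesBelow (n+1), Real.log p := Finset.sum_add_distrib
    _ ≤ Real.log (n !) + n * Real.log 4 := add_le_add (legendre_sum_le n) (theta_le n)
    _ ≤ n * Real.log n + n * Real.log 4 := by
        have h1 : ((n ! : ℕ) : ℝ) ≤ (n : ℝ) ^ n := by exact_mod_cast Nat.factorial_le_pow n
        have h2 : Real.log (n !) ≤ n * Real.log n := by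
          calc Real.log (n !) ≤ Real.log ((n:ℝ)^n) :=
            Real.log_le_log (by exact_mod_cast Nat.factorial_pos n) h1
            _ = n * Real.log n := Real.log_pow n n
        linarith
    _ = n * (Real.log n + Real.log 4) := by ring


noncomputable def Afun (n : ℕ) : ℝ := ∑ p ∈ primesBelow (n+1), Real.log p / p
noncomputable def Sfun (n : ℕ) : ℝ := ∑ p ∈ primesBelow (n+1), 1 / (p:ℝ)

lemma primesBelow_three : primesBelow 3 = {2} := by decide

lemma log_pos_of_two_le {n : ℕ} (hn : 2 ≤ n) : 0 < Real.log n :=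
  Real.log_pos (by exact_mod_cast hn)

lemma mertens_claim : ∀ n : ℕ, 2 ≤ n → Sfun n ≤ Real.log (Real.log n) + 4
    + (Afun n - Real.log n - Real.log 4) / Real.log n := by
  intro n hn
  induction n, hn using Nat.le_induction with
  | base =>
    have hS : Sfun 2 = 1/2 := by
      rw [Sfun]; norm_num [primesBelow_three]
    have hA : Afun 2 = Real.log 2 / 2 := by
      rw [Afun]; norm_num [primesBelow_three]
    have hl2 : (0:ℝ) < Real.log 2 := Real.log_pos (by norm_num)
    have hl4 : Real.log 4 = 2 * Real.log 2 := by
      rw [show (4:ℝ) = 2^2 by norm_num, Real.log_pow]; push_cast; ring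
    have hll2 : (-1 : ℝ) ≤ Real.log (Real.log 2) := by
      rw [Real.le_log_iff_exp_le hl2]
      have h1 : Real.exp (-1) ≤ 1/2 := by
        rw [Real.exp_neg]
        rw [inv_le_comm₀ (Real.exp_pos 1) (by norm_num)]
        have := Real.exp_one_gt_d9
        linarith
      have := Real.log_two_gt_d9
      linarith
    have hterm : (Afun 2 - Real.log 2 - Real.log 4) / Real.log 2 = -5/2 := by
      rw [hA, hl4]
      field_simp
      ring
    rw [hS]
    simp only [Nat.cast_ofNat]
    rw [hterm]
    linarith
  | succ n hn ih =>
    set L := Real.log n with hL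
    set L' := Real.log (n+1 : ℕ) with hL'
    have hL0 : 0 < L := log_pos_of_two_le hn
    have hL'0 : 0 < L' := log_pos_of_two_le (by omega)
    have hLL' : L ≤ L' := Real.log_le_log (by positivity) (by exact_mod_cast Nat.le_succ n)
    have hS : Sfun (n+1) = Sfun n + (Afun (n+1) - Afun n) / L' := by
      rw [Sfun, Sfun, Afun, Afun]
      rw [show n+1+1 = (n+1)+1 from rfl, primesBelow_succ (n+1)]
      by_cases hp : (n+1).Prime
      · rw [if_pos hp, Finset.sum_insert (notMem_primesBelow (n+1)),
          Finset.sum_insert (notMem_primesBelow (n+1))]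
        rw [add_sub_cancel_right]
        have hq : Real.log ((n+1 : ℕ) : ℝ) / ((n+1 : ℕ) : ℝ) / L' = 1 / ((n+1:ℕ) : ℝ) := by
          rw [div_div, mul_comm, ← div_div, div_self hL'0.ne']
        rw [hq]
        ring
      · rw [if_neg hp]
        simp
    have hA : Afun n ≤ L + Real.log 4 := A_le (by omega)
    have hloglog : (L' - L) / L' ≤ Real.log L' - Real.log L := by
      have h1 : Real.log (L / L') ≤ L / L' - 1 := Real.log_le_sub_one_of_pos (by positivity)
      rw [Real.log_div hL0.ne' hL'0.ne'] at h1
      have h2 : (L' - L)/L' = 1 - L/L' := by field_simp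
      linarith
    set u := Afun n - Real.log 4 with hu
    have key : (Afun n - L - Real.log 4)/L - (Afun n - L' - Real.log 4)/L' ≤
        Real.log L' - Real.log L := by
      have e1 : (Afun n - L - Real.log 4)/L - (Afun n - L' - Real.log 4)/L'
          = u * (L' - L) / (L * L') := by
        rw [hu]
        field_simp
        ring
      have e2 : u * (L' - L) ≤ L * (L' - L) :=
        mul_le_mul_of_nonneg_right (by rw [hu]; linarith) (by linarith)
      have e3 : u * (L' - L) / (L * L') ≤ L * (L' - L) / (L * L') := by gcongr
      have e4 : L * (L' - L) / (L * L') = (L' - L) / L' := mul_div_mul_left _ _ hL0.ne'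
      rw [e1]
      calc u * (L' - L) / (L * L') ≤ L * (L' - L) / (L * L') := e3
        _ = (L' - L) / L' := e4
        _ ≤ Real.log L' - Real.log L := hloglog
    have hdiv : (Afun (n+1) - Afun n)/L' = (Afun (n+1) - L' - Real.log 4)/L'
        - (Afun n - L' - Real.log 4)/L' := by
      rw [div_sub_div_same]
      ring_nf
    rw [hS]
    linarith [ih, key, hdiv]

lemma mertens2 {n : ℕ} (hn : 2 ≤ n) :
    ∑ p ∈ primesBelow (n+1), 1 / (p:ℝ) ≤ Real.log (Real.log n) + 4 := by
  have h := mertens_claim n hn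
  have hL0 : 0 < Real.log n := log_pos_of_two_le hn
  have h2 : (Afun n - Real.log n - Real.log 4) / Real.log n ≤ 0 :=
    div_nonpos_of_nonpos_of_nonneg
      (by have := A_le (n := n) (by omega); rw [Afun]; linarith) hL0.le
  have h3 : Sfun n ≤ Real.log (Real.log n) + 4 := by linarith
  rw [Sfun] at h3
  exact h3

lemma sum_Icc_inv_sq (M : ℕ) (hM : 1 ≤ M) :
    ∑ n ∈ Finset.Icc 2 M, (((n:ℝ) - 1)⁻¹ - (n:ℝ)⁻¹) = 1 - (M:ℝ)⁻¹ := by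
  induction M, hM using Nat.le_induction with
  | base => norm_num
  | succ M hM ih =>
    rw [show M + 1 = M + 1 from rfl, Finset.sum_Icc_succ_top (by omega : 2 ≤ M + 1), ih]
    have hM0 : (0:ℝ) < M := by exact_mod_cast hM
    push_cast
    rw [add_sub_cancel_right]
    ring

lemma sum_inv_sq_le (s : Finset ℕ) (h : ∀ p ∈ s, 2 ≤ p) :
    ∑ p ∈ s, ((p:ℝ))⁻¹ ^ 2 ≤ 1 := by
  set M := s.sup id ⊔ 1 with hM
  have hsub : s ⊆ Finset.Icc 2 M := by
    intro p hp
    rw [Finset.mem_Icc]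
    exact ⟨h p hp, le_trans (Finset.le_sup (f := id) hp) le_sup_left⟩
  calc ∑ p ∈ s, ((p:ℝ))⁻¹ ^ 2 ≤ ∑ p ∈ Finset.Icc 2 M, ((p:ℝ))⁻¹ ^ 2 :=
        Finset.sum_le_sum_of_subset_of_nonneg hsub (fun i _ _ ↦ by positivity)
    _ ≤ ∑ n ∈ Finset.Icc 2 M, (((n:ℝ) - 1)⁻¹ - (n:ℝ)⁻¹) := by
        apply Finset.sum_le_sum
        intro n hn
        have h2 : 2 ≤ n := (Finset.mem_Icc.mp hn).1
        have hn0 : (0:ℝ) < n := by exact_mod_cast (by omega : 0 < n)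
        have hn1 : (0:ℝ) < (n:ℝ) - 1 := by
          have : (2:ℝ) ≤ n := by exact_mod_cast h2
          linarith
        rw [inv_pow, ← one_div, ← one_div, ← one_div, div_sub_div _ _ hn1.ne' hn0.ne']
        rw [div_le_div_iff₀ (by positivity) (by positivity)]
        nlinarith
    _ = 1 - (M:ℝ)⁻¹ := sum_Icc_inv_sq M le_sup_right
    _ ≤ 1 := by
        have : (0:ℝ) ≤ (M:ℝ)⁻¹ := by positivity
        linarith

end MertensSection

/-- `∑_{n ≤ x} z^{Ω₃(n)}/φ(n) ≪ (log x)^z / (3 - z)` uniformly for `1 < z < 3`. -/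
theorem sum_zOmega3_div_totient :
    ∃ c : ℝ, 0 < c ∧ ∀ x : ℝ, 3 ≤ x → ∀ z : ℝ, 1 < z → z < 3 →
      ∑ n ∈ Finset.Icc 1 ⌊x⌋₊, z ^ Omega3 n / (Nat.totient n : ℝ)
        ≤ c / (3 - z) * Real.log x ^ z := by
  refine ⟨18 * Real.exp 52, by positivity, ?_⟩
  intro x hx z hz1 hz3
  have hz0 : (0:ℝ) ≤ z := by linarith
  have hzle : (1:ℝ) ≤ z := hz1.le
  have h3z : (0:ℝ) < 3 - z := by linarith
  set N := ⌊x⌋₊ with hN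
  have hN3 : 3 ≤ N := Nat.le_floor (by exact_mod_cast hx)
  have hNR : (3:ℝ) ≤ (N:ℝ) := by exact_mod_cast hN3
  have hlogN : 0 < Real.log N := Real.log_pos (by linarith)
  set Λ := Real.log (Real.log N) with hΛ
  set s := (N+1).primesBelow with hs
  set F : ℕ → ℝ := fun p ↦ ∑' k, g z (p ^ k) with hF
  -- Euler product bound
  have hsump : ∀ {p : ℕ}, p.Prime → Summable (fun k ↦ ‖g z (p ^ k)‖) := by
    intro p hp
    have he : (fun k ↦ ‖g z (p ^ k)‖) = fun k ↦ g z (p ^ k) :=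
      funext fun k ↦ Real.norm_of_nonneg (g_nonneg hz0 _)
    rw [he]
    rcases eq_or_ne p 2 with rfl | hp2
    · exact summable_g_two hz0
    · exact summable_g_odd hz0 hz3 hp hp2
  have key := (EulerProduct.summable_and_hasSum_smoothNumbers_prod_primesBelow_tsum
    (f := g z) (g_one z) (fun {m n} h ↦ g_mul h) hsump (N+1)).2
  have hsummable : Summable (fun m : (N+1).smoothNumbers ↦ g z m) := key.summable
  have hle1 : ∑ n ∈ Finset.Icc 1 N, g z n ≤ ∏ p ∈ s, F p := by
    rw [hs, hF, ← key.tsum_eq, _root_.tsum_subtype]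
    calc ∑ n ∈ Finset.Icc 1 N, g z n
        = ∑ n ∈ Finset.Icc 1 N, Set.indicator ((N+1).smoothNumbers) (g z) n := by
          apply Finset.sum_congr rfl
          intro n hn
          rw [Finset.mem_Icc] at hn
          rw [Set.indicator_of_mem]
          refine Nat.mem_smoothNumbers.mpr ⟨by omega, fun p hp ↦ ?_⟩
          have h1 : p ∣ n := Nat.dvd_of_mem_primeFactorsList hp
          have h2 := Nat.le_of_dvd (by omega) h1
          omega
      _ ≤ ∑' n, Set.indicator ((N+1).smoothNumbers) (g z) n :=
          Summable.sum_le_tsum _ (fun n _ ↦ Set.indicator_apply_nonneg (fun _ ↦ g_nonneg hz0 n))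
            (summable_subtype_iff_indicator.mp hsummable)
  -- split product
  have h2s : 2 ∈ s := Nat.mem_primesBelow.mpr ⟨by omega, Nat.prime_two⟩
  have h3s : 3 ∈ s.erase 2 :=
    Finset.mem_erase.mpr ⟨by norm_num, Nat.mem_primesBelow.mpr ⟨by omega, Nat.prime_three⟩⟩
  set t := (s.erase 2).erase 3 with ht
  have hsplit : ∏ p ∈ s, F p = F 2 * (F 3 * ∏ p ∈ t, F p) := by
    rw [Finset.mul_prod_erase (s.erase 2) F h3s, Finset.mul_prod_erase s F h2s]
  have hFnn : ∀ p, 0 ≤ F p := fun p ↦ tsum_nonneg fun k ↦ g_nonneg hz0 _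
  have hF2 : F 2 ≤ 4 := tsum_g_two_le hz0
  have hF3 : F 3 ≤ (9/2) / (3 - z) := by
    have h := tsum_g_odd hz0 hz3 Nat.prime_three (by norm_num)
    simp only [hF]
    rw [h]
    push_cast
    exact F3_le hzle hz3
  have hmemt : ∀ p ∈ t, p.Prime ∧ 5 ≤ p := by
    intro p hp
    rw [ht] at hp
    have hp3 := Finset.mem_erase.mp hp
    have hp2 := Finset.mem_erase.mp hp3.2
    have hpp := Nat.prime_of_mem_primesBelow hp2.2
    have h4 : p ≠ 4 := by rintro rfl; norm_num at hpp
    have := hpp.two_le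
    exact ⟨hpp, by omega⟩
  have hrest : ∏ p ∈ t, F p ≤ Real.exp (z * Λ + 52) := by
    calc ∏ p ∈ t, F p ≤ ∏ p ∈ t, Real.exp (z/(p:ℝ) + 40/(p:ℝ)^2) := by
          apply Finset.prod_le_prod (fun p _ ↦ hFnn p)
          intro p hp
          obtain ⟨hpp, hp5⟩ := hmemt p hp
          have hp2 : p ≠ 2 := by omega
          have hP5 : (5:ℝ) ≤ (p:ℝ) := by exact_mod_cast hp5
          simp only [hF]
          rw [tsum_g_odd hz0 hz3 hpp hp2]
          exact Fp_le hzle hz3 hP5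
      _ = Real.exp (∑ p ∈ t, (z/(p:ℝ) + 40/(p:ℝ)^2)) := (Real.exp_sum t _).symm
      _ ≤ Real.exp (z * Λ + 52) := by
          apply Real.exp_le_exp.mpr
          have hsum1 : ∑ p ∈ t, (1:ℝ)/p ≤ Λ + 4 := by
            refine le_trans (Finset.sum_le_sum_of_subset_of_nonneg ?_
              (fun p _ _ ↦ by positivity)) (mertens2 (by omega : 2 ≤ N))
            rw [ht, hs]
            exact (Finset.erase_subset _ _).trans (Finset.erase_subset _ _)
          have hsum2 : ∑ p ∈ t, ((p:ℝ))⁻¹ ^ 2 ≤ 1 :=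
            sum_inv_sq_le t (fun p hp ↦ (hmemt p hp).1.two_le)
          have hexpand : ∑ p ∈ t, (z/(p:ℝ) + 40/(p:ℝ)^2)
              = z * ∑ p ∈ t, (1:ℝ)/p + 40 * ∑ p ∈ t, ((p:ℝ))⁻¹ ^ 2 := by
            rw [Finset.sum_add_distrib, Finset.mul_sum, Finset.mul_sum]
            congr 1
            · exact Finset.sum_congr rfl fun p _ ↦ by rw [mul_one_div]
            · exact Finset.sum_congr rfl fun p _ ↦ by
                rw [inv_pow, ← one_div, mul_one_div]
          rw [hexpand]
          have e1 : z * ∑ p ∈ t, (1:ℝ)/p ≤ z * (Λ + 4) :=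
            mul_le_mul_of_nonneg_left hsum1 hz0
          have e2 : (40:ℝ) * ∑ p ∈ t, ((p:ℝ))⁻¹ ^ 2 ≤ 40 * 1 :=
            mul_le_mul_of_nonneg_left hsum2 (by norm_num)
          nlinarith
  -- combine
  have hcomb : ∏ p ∈ s, F p ≤ 4 * ((9/2)/(3-z) * Real.exp (z * Λ + 52)) := by
    rw [hsplit]
    have h1 : F 3 * ∏ p ∈ t, F p ≤ (9/2)/(3-z) * Real.exp (z * Λ + 52) :=
      mul_le_mul hF3 hrest (Finset.prod_nonneg fun p _ ↦ hFnn p) (by positivity)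
    exact mul_le_mul hF2 h1 (mul_nonneg (hFnn 3) (Finset.prod_nonneg fun p _ ↦ hFnn p))
      (by norm_num)
  have hexp : Real.exp (z * Λ + 52) = Real.exp 52 * Real.log N ^ z := by
    rw [Real.exp_add, Real.rpow_def_of_pos hlogN, hΛ, mul_comm (Real.log (Real.log N)) z,
      mul_comm]
  have hfinal : (4:ℝ) * ((9/2)/(3-z) * (Real.exp 52 * Real.log N ^ z))
      = (18 * Real.exp 52) / (3 - z) * Real.log N ^ z := by
    field_simp
    ring
  have hmono : Real.log N ^ z ≤ Real.log x ^ z := by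
    apply Real.rpow_le_rpow hlogN.le _ hz0
    apply Real.log_le_log (by linarith)
    exact Nat.floor_le (by linarith)
  calc ∑ n ∈ Finset.Icc 1 N, z ^ Omega3 n / (Nat.totient n : ℝ)
      = ∑ n ∈ Finset.Icc 1 N, g z n := rfl
    _ ≤ ∏ p ∈ s, F p := hle1
    _ ≤ 4 * ((9/2)/(3-z) * Real.exp (z * Λ + 52)) := hcomb
    _ = (18 * Real.exp 52) / (3 - z) * Real.log N ^ z := by rw [hexp, hfinal]
    _ ≤ (18 * Real.exp 52) / (3 - z) * Real.log x ^ z := by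
        apply mul_le_mul_of_nonneg_left hmono (by positivity)
end
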